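/- arXiv:1703.06562 — 5 statements merged into one kernel-verified Lean document; each statement's English description precedes it below -/
import Mathlib

section
/- Let G and H be groups, σ ∈ G and τ ∈ H elements of finite order. Then C_{G×H}((σ, τ)) = C_G(σ) × C_H(τ), and the map Λ_{G×H}((σ, τ)) → Λ_G(σ) ×_{ℝ/ℤ} Λ_H(τ) sending [(a, b), t] to ([a, t], [b, t]) is a well-defined group isomorphism, where Λ_G(σ) ×_{ℝ/ℤ} Λ_H(τ) denotes the fiber product {(x, y) ∈ Λ_G(σ) × Λ_H(τ) : π(x) = π(y)} over the homomorphisms π : Λ_G(σ) → ℝ/ℤ and π : Λ_H(τ) → ℝ/ℤ given by [a, t] ↦ t + ℤ. -/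
namespace QEC

variable {G : Type*} [Group G]

/-- The centralizer of `g` in `G`. -/
abbrev Centz (g : G) : Subgroup G := Subgroup.centralizer {g}

/-- `g` as an element of its own centralizer. -/
def gC (g : G) : Centz g :=
  ⟨g, by
    rw [Subgroup.mem_centralizer_iff]
    intro h hh
    rw [Set.mem_singleton_iff] at hh
    subst hh; rfl⟩

/-- The generator `(g, -1)` of `N_g` inside `C_G(g) × ℝ`. -/
def genN (g : G) : Centz g × Multiplicative ℝ := (gC g, Multiplicative.ofAdd (-1 : ℝ))

/-- The subgroup `N_g` of `C_G(g) × ℝ` generated by `(g, -1)`. -/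
def Ng (g : G) : Subgroup (Centz g × Multiplicative ℝ) := Subgroup.zpowers (genN g)

lemma genN_mem_center (g : G) :
    genN g ∈ Subgroup.center (Centz g × Multiplicative ℝ) := by
  rw [Subgroup.mem_center_iff]
  intro p
  have h1 : g * (p.1 : G) = (p.1 : G) * g :=
    Subgroup.mem_centralizer_iff.mp p.1.2 g (Set.mem_singleton g)
  exact Prod.ext (Subtype.ext h1.symm) (mul_comm _ _)

instance Ng_normal (g : G) : (Ng g).Normal := by
  constructor
  intro n hn x
  obtain ⟨k, rfl⟩ := Subgroup.mem_zpowers_iff.mp hn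
  have hcmt : Commute x (genN g) := Subgroup.mem_center_iff.mp (genN_mem_center g) x
  have h2 : x * genN g ^ k * x⁻¹ = genN g ^ k := by
    rw [(hcmt.zpow_right k).eq, mul_inv_cancel_right]
  rw [h2]
  exact Subgroup.zpow_mem _ (Subgroup.mem_zpowers _) k

/-- The group `Λ_G(g) = (C_G(g) × ℝ)/N_g`. -/
abbrev Lam (g : G) : Type _ := (Centz g × Multiplicative ℝ) ⧸ Ng g

/-- The class `[a, t]` in `Λ_G(g)`. -/
def lmk (g : G) (a : Centz g) (t : ℝ) : Lam g :=
  QuotientGroup.mk (a, Multiplicative.ofAdd t)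

/-- The canonical map `C_G(g) → Λ_G(g)`, `a ↦ [a, 0]`. -/
def inclC (g : G) : Centz g →* Lam g :=
  (QuotientGroup.mk' (Ng g)).comp (MonoidHom.inl (Centz g) (Multiplicative ℝ))

/-- The projection `Λ_G(g) → ℝ/ℤ`, `[a, t] ↦ t + ℤ`. -/
noncomputable def piHom (g : G) : Lam g →* Multiplicative (AddCircle (1 : ℝ)) :=
  QuotientGroup.lift (Ng g)
    ((AddMonoidHom.toMultiplicative
        (QuotientAddGroup.mk' (AddSubgroup.zmultiples (1 : ℝ)))).comp
      (MonoidHom.snd (Centz g) (Multiplicative ℝ)))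
    (by
      intro x hx
      obtain ⟨k, rfl⟩ := Subgroup.mem_zpowers_iff.mp hx
      rw [MonoidHom.mem_ker, map_zpow]
      have h1 : (AddMonoidHom.toMultiplicative
          (QuotientAddGroup.mk' (AddSubgroup.zmultiples (1 : ℝ)))).comp
          (MonoidHom.snd (Centz g) (Multiplicative ℝ)) (genN g) = 1 := by
        show Multiplicative.ofAdd
            ((QuotientAddGroup.mk' (AddSubgroup.zmultiples (1 : ℝ))) (-1 : ℝ)) = 1
        have : ((QuotientAddGroup.mk' (AddSubgroup.zmultiples (1 : ℝ))) (-1 : ℝ)) = 0 := by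
          rw [QuotientAddGroup.mk'_apply, QuotientAddGroup.eq_zero_iff]
          exact AddSubgroup.neg_mem _ (AddSubgroup.mem_zmultiples (1 : ℝ))
        rw [this]; rfl
      rw [h1, one_zpow])

/-- First projection `C_{G×H}((σ,τ)) → C_G(σ)`. -/
def centzFst {G H : Type*} [Group G] [Group H] (σ : G) (τ : H) :
    Centz (G := G × H) (σ, τ) →* Centz σ :=
  ((MonoidHom.fst G H).comp (Centz (G := G × H) (σ, τ)).subtype).codRestrict _ (fun a => by
    rw [Subgroup.mem_centralizer_iff]
    intro y hy
    rw [Set.mem_singleton_iff] at hy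
    rw [hy]
    have h := Subgroup.mem_centralizer_iff.mp a.2 (σ, τ) (Set.mem_singleton _)
    exact congrArg Prod.fst h)

/-- Second projection `C_{G×H}((σ,τ)) → C_H(τ)`. -/
def centzSnd {G H : Type*} [Group G] [Group H] (σ : G) (τ : H) :
    Centz (G := G × H) (σ, τ) →* Centz τ :=
  ((MonoidHom.snd G H).comp (Centz (G := G × H) (σ, τ)).subtype).codRestrict _ (fun a => by
    rw [Subgroup.mem_centralizer_iff]
    intro y hy
    rw [Set.mem_singleton_iff] at hy
    rw [hy]
    have h := Subgroup.mem_centralizer_iff.mp a.2 (σ, τ) (Set.mem_singleton _)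
    exact congrArg Prod.snd h)

/-- The fiber product `Λ_G(σ) ×_{ℝ/ℤ} Λ_H(τ)` over the two projections to `ℝ/ℤ`. -/
noncomputable def fiberProd {G H : Type*} [Group G] [Group H] (σ : G) (τ : H) :
    Subgroup (Lam σ × Lam τ) where
  carrier := {p | piHom σ p.1 = piHom τ p.2}
  one_mem' := by simp
  mul_mem' := by
    intro a b ha hb
    simp only [Set.mem_setOf_eq, Prod.fst_mul, Prod.snd_mul, map_mul] at *
    rw [ha, hb]
  inv_mem' := by
    intro a ha
    simp only [Set.mem_setOf_eq, Prod.fst_inv, Prod.snd_inv, map_inv] at *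
    rw [ha]


section Seven

variable {G H : Type*} [Group G] [Group H]

lemma genN_zpow (g : G) (k : ℤ) :
    genN g ^ k = (gC g ^ k, Multiplicative.ofAdd (-(k : ℝ))) := by
  refine Prod.ext ?_ ?_
  · simp [genN]
  · show (Multiplicative.ofAdd (-1 : ℝ)) ^ k = _
    apply Multiplicative.toAdd.injective
    rw [toAdd_zpow]
    simp

lemma centz_prod_iff (σ : G) (τ : H) (x : G × H) :
    x ∈ Centz (G := G × H) (σ, τ) ↔ x.1 ∈ Centz σ ∧ x.2 ∈ Centz τ := by
  simp only [Subgroup.mem_centralizer_iff, Set.mem_singleton_iff]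
  constructor
  · intro h
    have h' := h (σ, τ) rfl
    exact ⟨fun y hy => by subst hy; exact congrArg Prod.fst h',
           fun y hy => by subst hy; exact congrArg Prod.snd h'⟩
  · rintro ⟨h1, h2⟩ y rfl
    exact Prod.ext (h1 σ rfl) (h2 τ rfl)

/-- The map `C_{G×H}((σ,τ)) × ℝ →* Λ_G(σ) × Λ_H(τ)`. -/
noncomputable def psiHom (σ : G) (τ : H) :
    (Centz (G := G × H) (σ, τ) × Multiplicative ℝ) →* Lam σ × Lam τ :=
  ((QuotientGroup.mk' (Ng σ)).comp
      ((centzFst σ τ).prodMap (MonoidHom.id (Multiplicative ℝ)))).prod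
    ((QuotientGroup.mk' (Ng τ)).comp
      ((centzSnd σ τ).prodMap (MonoidHom.id (Multiplicative ℝ))))

lemma Ng_le_ker_psi (σ : G) (τ : H) : Ng (G := G × H) (σ, τ) ≤ (psiHom σ τ).ker := by
  rw [Ng, Subgroup.zpowers_le, MonoidHom.mem_ker]
  have h1 : (QuotientGroup.mk (genN σ) : Lam σ) = 1 :=
    (QuotientGroup.eq_one_iff _).mpr (Subgroup.mem_zpowers _)
  have h2 : (QuotientGroup.mk (genN τ) : Lam τ) = 1 :=
    (QuotientGroup.eq_one_iff _).mpr (Subgroup.mem_zpowers _)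
  exact Prod.ext h1 h2

/-- The lifted map `Λ_{G×H}((σ,τ)) →* Λ_G(σ) × Λ_H(τ)`. -/
noncomputable def PhiHom (σ : G) (τ : H) :
    Lam (G := G × H) (σ, τ) →* Lam σ × Lam τ :=
  QuotientGroup.lift _ (psiHom σ τ) (Ng_le_ker_psi σ τ)

lemma Phi_mem_fiber (σ : G) (τ : H) (q : Lam (G := G × H) (σ, τ)) :
    PhiHom σ τ q ∈ fiberProd σ τ := by
  refine QuotientGroup.induction_on q ?_
  rintro ⟨c, t⟩
  show piHom σ _ = piHom τ _
  rfl

lemma Phi_inj (σ : G) (τ : H) : Function.Injective (PhiHom σ τ) := by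
  rw [injective_iff_map_eq_one]
  intro q
  refine QuotientGroup.induction_on q ?_
  rintro ⟨c, t⟩ h
  have h1 : (QuotientGroup.mk (centzFst σ τ c, t) : Lam σ) = 1 := congrArg Prod.fst h
  have h2 : (QuotientGroup.mk (centzSnd σ τ c, t) : Lam τ) = 1 := congrArg Prod.snd h
  rw [QuotientGroup.eq_one_iff] at h1 h2
  obtain ⟨k, hk⟩ := Subgroup.mem_zpowers_iff.mp h1
  obtain ⟨m, hm⟩ := Subgroup.mem_zpowers_iff.mp h2
  rw [genN_zpow] at hk hm
  have htk : Multiplicative.ofAdd (-(k : ℝ)) = t := congrArg Prod.snd hk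
  have htm : Multiplicative.ofAdd (-(m : ℝ)) = t := congrArg Prod.snd hm
  have hkm : k = m := by
    have h' : (-(k : ℝ)) = -(m : ℝ) :=
      congrArg Multiplicative.toAdd (htk.trans htm.symm)
    exact_mod_cast neg_injective h'
  subst hkm
  have ha : (c : G × H).1 = σ ^ k := by
    have := congrArg (fun z => ((Prod.fst z : Centz σ) : G)) hk
    exact (by simpa [gC] using this.symm : ((centzFst σ τ c : Centz σ) : G) = σ ^ k)
  have hb : (c : G × H).2 = τ ^ k := by
    have := congrArg (fun z => ((Prod.fst z : Centz τ) : H)) hm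
    exact (by simpa [gC] using this.symm : ((centzSnd σ τ c : Centz τ) : H) = τ ^ k)
  rw [QuotientGroup.eq_one_iff]
  refine Subgroup.mem_zpowers_iff.mpr ⟨k, ?_⟩
  rw [genN_zpow]
  refine Prod.ext ?_ htk
  refine Subtype.ext ?_
  show ((σ, τ) : G × H) ^ k = (c : G × H)
  exact Prod.ext (by simpa using ha.symm) (by simpa using hb.symm)

lemma Phi_surj_aux (σ : G) (τ : H) (x : Lam σ) (y : Lam τ)
    (h : piHom σ x = piHom τ y) :
    ∃ q : Lam (G := G × H) (σ, τ), PhiHom σ τ q = (x, y) := by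
  revert h
  refine QuotientGroup.induction_on x ?_
  rintro ⟨a, s⟩
  refine QuotientGroup.induction_on y ?_
  rintro ⟨b, t⟩ h
  have h' : (QuotientAddGroup.mk (Multiplicative.toAdd s) : AddCircle (1 : ℝ))
      = QuotientAddGroup.mk (Multiplicative.toAdd t) := congrArg Multiplicative.toAdd h
  rw [QuotientAddGroup.eq] at h'
  obtain ⟨n, hn⟩ := AddSubgroup.mem_zmultiples_iff.mp h'
  -- hn : n • (1:ℝ) = -toAdd s + toAdd t
  have hn' : (n : ℝ) = -Multiplicative.toAdd s + Multiplicative.toAdd t := by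
    simpa using hn
  set b' : Centz τ := b * gC τ ^ n with hb'
  have hmem : ((a : G), (b' : H)) ∈ Centz (G := G × H) (σ, τ) :=
    (centz_prod_iff σ τ _).mpr ⟨a.2, b'.2⟩
  refine ⟨QuotientGroup.mk ((⟨((a : G), (b' : H)), hmem⟩ : Centz (G := G × H) (σ, τ)), s), ?_⟩
  have e1 : (QuotientGroup.mk (centzFst σ τ ⟨((a : G), (b' : H)), hmem⟩, s) : Lam σ)
      = QuotientGroup.mk (a, s) := by
    congr 1
  have e2 : (QuotientGroup.mk (centzSnd σ τ ⟨((a : G), (b' : H)), hmem⟩, s) : Lam τ)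
      = QuotientGroup.mk (b, t) := by
    have hc : centzSnd σ τ ⟨((a : G), (b' : H)), hmem⟩ = b' := Subtype.ext rfl
    rw [hc]
    rw [QuotientGroup.eq]
    refine Subgroup.mem_zpowers_iff.mpr ⟨-n, ?_⟩
    rw [genN_zpow]
    refine Prod.ext ?_ ?_
    · show gC τ ^ (-n) = (b', s).1⁻¹ * b
      rw [hb']
      group
    · apply Multiplicative.toAdd.injective
      show -((-n : ℤ) : ℝ) = Multiplicative.toAdd (s⁻¹ * t)
      rw [toAdd_mul, toAdd_inv]
      push_cast
      linarith [hn']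
  exact Prod.ext e1 e2

end Seven

/-- `C_{G×H}((σ,τ)) = C_G(σ) × C_H(τ)`, and
`Λ_{G×H}((σ,τ)) ≅ Λ_G(σ) ×_{ℝ/ℤ} Λ_H(τ)` via `[(a,b), t] ↦ ([a,t], [b,t])`. -/
theorem statement7 {G H : Type*} [Group G] [Group H] (σ : G) (τ : H)
    (hσ : IsOfFinOrder σ) (hτ : IsOfFinOrder τ) :
    (∀ x : G × H, x ∈ Centz (G := G × H) (σ, τ) ↔ x.1 ∈ Centz σ ∧ x.2 ∈ Centz τ)
    ∧ ∃ e : Lam (G := G × H) (σ, τ) ≃* fiberProd σ τ,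
        ∀ (c : Centz (G := G × H) (σ, τ)) (t : ℝ),
          ((e (lmk (σ, τ) c t) : Lam σ × Lam τ))
            = (lmk σ (centzFst σ τ c) t, lmk τ (centzSnd σ τ c) t) := by
  refine ⟨centz_prod_iff σ τ, ?_⟩
  set e' : Lam (G := G × H) (σ, τ) →* fiberProd σ τ :=
    (PhiHom σ τ).codRestrict (fiberProd σ τ) (Phi_mem_fiber σ τ) with he'
  have hinj : Function.Injective e' := by
    intro q r hqr
    apply Phi_inj σ τ
    exact congrArg Subtype.val hqr
  have hsurj : Function.Surjective e' := by
    rintro ⟨⟨x, y⟩, hp⟩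
    have hp' : piHom σ x = piHom τ y := hp
    obtain ⟨q, hq⟩ := Phi_surj_aux σ τ x y hp'
    exact ⟨q, Subtype.ext hq⟩
  refine ⟨MulEquiv.ofBijective e' ⟨hinj, hsurj⟩, ?_⟩
  intro c t
  rfl


end QEC
end

section
/- Let G be a group and σ ∈ G an element of order l. Let V be a finite-dimensional complex vector space and ρ : C_G(σ) → GL(V) an injective group homomorphism. Suppose V = ⨁_{j∈J} V_j is a direct sum decomposition into ρ-invariant subspaces (J a finite index set) such that for each j there is an integer m_j ∈ {1, …, l} with ρ(σ)v = e^{2πi m_j/l}·v for all v ∈ V_j, and suppose there is j₀ ∈ J with V_{j₀} ≠ 0 and ρ(a)v = v for all a ∈ C_G(σ) and v ∈ V_{j₀}. Then the map C_G(σ) × ℝ → GL(V) sending (a, t) to the operator that acts on each V_j by v ↦ e^{2πi m_j t/l}·ρ(a)v is a group homomorphism trivial on N_σ, and the induced representation of Λ_G(σ) on V is faithful (injective). -/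
namespace QEC

variable {G : Type*} [Group G]

noncomputable section Aux10

variable {V : Type*} [AddCommGroup V] [Module ℂ V]
variable {J : Type*} [DecidableEq J] {Vj : J → Submodule ℂ V}

/-- Endomorphism scaling each `Vj j` by `c j`. -/
def scaleD (hdec : DirectSum.IsInternal Vj) (c : J → ℂ) : Module.End ℂ V :=
  (DirectSum.coeLinearMap Vj).comp
    ((DirectSum.toModule ℂ J (DirectSum J fun j => ↥(Vj j)) fun j =>
        (DirectSum.lof ℂ J (fun j => ↥(Vj j)) j).comp (c j • LinearMap.id)).comp
      (LinearEquiv.ofBijective (DirectSum.coeLinearMap Vj) hdec).symm.toLinearMap)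

lemma scaleD_apply (hdec : DirectSum.IsInternal Vj) (c : J → ℂ) {j : J} {v : V}
    (hv : v ∈ Vj j) : scaleD hdec c v = c j • v := by
  set e := LinearEquiv.ofBijective (DirectSum.coeLinearMap Vj) hdec with he
  have h1 : e.symm v = DirectSum.lof ℂ J (fun j => ↥(Vj j)) j ⟨v, hv⟩ := by
    rw [LinearEquiv.symm_apply_eq]
    simp [he, DirectSum.lof_eq_of, DirectSum.coeLinearMap_of]
    exact (DirectSum.coeLinearMap_of Vj j ⟨v, hv⟩).symm
  simp only [scaleD, LinearMap.coe_comp, LinearEquiv.coe_coe, Function.comp_apply]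
  erw [h1, DirectSum.toModule_lof]
  simp [DirectSum.lof_eq_of, DirectSum.coeLinearMap_of]

omit [DecidableEq J] in
lemma end_ext (htop : (⨆ j, Vj j) = ⊤) {f g : Module.End ℂ V}
    (h : ∀ j, ∀ v ∈ Vj j, f v = g v) : f = g := by
  ext v
  have hv : v ∈ ⨆ j, Vj j := htop ▸ Submodule.mem_top
  exact Submodule.iSup_induction (motive := fun w => f w = g w) Vj hv
    (fun j x hx => h j x hx) (by simp) (fun x y hx hy => by
      simp only [map_add]
      exact congrArg₂ (· + ·) hx hy)

/-- The unit of `End V` scaling each `Vj j` by the unit `c j`. -/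
def sUnit (hdec : DirectSum.IsInternal Vj) (c : J → ℂˣ) : (Module.End ℂ V)ˣ where
  val := scaleD hdec fun j => (c j : ℂ)
  inv := scaleD hdec fun j => ((c j)⁻¹ : ℂˣ)
  val_inv := end_ext hdec.submodule_iSup_eq_top fun j v hv => by
    rw [Module.End.mul_apply, scaleD_apply hdec _ hv,
      scaleD_apply hdec _ (Submodule.smul_mem _ _ hv), Module.End.one_apply, smul_smul]
    simp
  inv_val := end_ext hdec.submodule_iSup_eq_top fun j v hv => by
    rw [Module.End.mul_apply, scaleD_apply hdec _ hv,
      scaleD_apply hdec _ (Submodule.smul_mem _ _ hv), Module.End.one_apply, smul_smul]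
    simp

lemma sUnit_apply (hdec : DirectSum.IsInternal Vj) (c : J → ℂˣ) {j : J} {v : V}
    (hv : v ∈ Vj j) : (sUnit hdec c : Module.End ℂ V) v = (c j : ℂ) • v :=
  scaleD_apply hdec _ hv

end Aux10

/-- Let `σ ∈ G` have order `l`, let `ρ : C_G(σ) → GL(V)` be faithful,
with `V = ⨁_j V_j` a decomposition into `ρ`-invariant subspaces on which `ρ(σ)` acts by
`e^{2πi m_j/l}`, and suppose some nonzero `V_{j₀}` carries the trivial `C_G(σ)`-action.
Then `(a, t) ↦ (v ↦ e^{2πi m_j t/l}·ρ(a)v on V_j)` is a homomorphism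
`C_G(σ) × ℝ → GL(V)` trivial on `N_σ`, and the induced representation of `Λ_G(σ)`
on `V` is faithful. -/
theorem statement10 {G : Type*} [Group G] (σ : G) (l : ℕ)
    (hl : orderOf σ = l) (hl0 : 0 < l)
    {V : Type*} [AddCommGroup V] [Module ℂ V] [FiniteDimensional ℂ V]
    {J : Type*} [Fintype J] [DecidableEq J] (Vj : J → Submodule ℂ V)
    (hdec : DirectSum.IsInternal Vj)
    (ρ : Centz σ →* (Module.End ℂ V)ˣ) (hρ : Function.Injective ρ)
    (hinv : ∀ (j : J) (a : Centz σ), ∀ v ∈ Vj j, (ρ a : Module.End ℂ V) v ∈ Vj j)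
    (m : J → ℕ) (hm : ∀ j, 1 ≤ m j ∧ m j ≤ l)
    (hσact : ∀ j, ∀ v ∈ Vj j, (ρ (gC σ) : Module.End ℂ V) v
        = Complex.exp (2 * (Real.pi : ℂ) * Complex.I * (m j : ℂ) / (l : ℂ)) • v)
    (j₀ : J) (hj₀ : Vj j₀ ≠ ⊥)
    (htriv : ∀ a : Centz σ, ∀ v ∈ Vj j₀, (ρ a : Module.End ℂ V) v = v) :
    ∃ F : Centz σ × Multiplicative ℝ →* (Module.End ℂ V)ˣ,
      (∀ (a : Centz σ) (t : ℝ) (j : J), ∀ v ∈ Vj j,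
        (F (a, Multiplicative.ofAdd t) : Module.End ℂ V) v
          = Complex.exp (2 * (Real.pi : ℂ) * Complex.I * (m j : ℂ) * (t : ℂ) / (l : ℂ))
              • ((ρ a : Module.End ℂ V) v))
      ∧ (∀ n ∈ Ng σ, F n = 1)
      ∧ ∃ ψ : Lam σ →* (Module.End ℂ V)ˣ,
          (∀ (a : Centz σ) (t : ℝ) (j : J), ∀ v ∈ Vj j,
            (ψ (lmk σ a t) : Module.End ℂ V) v
              = Complex.exp (2 * (Real.pi : ℂ) * Complex.I * (m j : ℂ) * (t : ℂ) / (l : ℂ))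
                  • ((ρ a : Module.End ℂ V) v))
          ∧ Function.Injective ψ := by
  classical
  have hlC : (l : ℂ) ≠ 0 := Nat.cast_ne_zero.mpr hl0.ne'
  set c : J → ℝ → ℂ := fun j t =>
    Complex.exp (2 * (Real.pi : ℂ) * Complex.I * (m j : ℂ) * (t : ℂ) / (l : ℂ)) with hc
  have hcdef : ∀ j t, c j t
      = Complex.exp (2 * (Real.pi : ℂ) * Complex.I * (m j : ℂ) * (t : ℂ) / (l : ℂ)) :=
    fun _ _ => rfl
  have hcadd : ∀ j s t, c j s * c j t = c j (s + t) := by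
    intro j s t
    simp only [hcdef]
    rw [← Complex.exp_add]
    congr 1
    push_cast
    field_simp
  have hc0 : ∀ j, c j 0 = 1 := by
    intro j; simp [hcdef]
  have hcne : ∀ j t, c j t ≠ 0 := fun j t => Complex.exp_ne_zero _
  set D : ℝ → (Module.End ℂ V)ˣ := fun t => sUnit hdec (fun j => Units.mk0 (c j t) (hcne j t))
    with hDdef
  have htop := hdec.submodule_iSup_eq_top
  have hDapply : ∀ (t : ℝ) (j : J), ∀ v ∈ Vj j, (D t : Module.End ℂ V) v = c j t • v :=
    fun t j v hv => sUnit_apply hdec _ hv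
  have hDadd : ∀ s t : ℝ, D (s + t) = D s * D t := by
    intro s t
    apply Units.ext
    apply end_ext htop
    intro j v hv
    rw [Units.val_mul, Module.End.mul_apply, hDapply t j v hv, map_smul,
      hDapply s j v hv, hDapply (s + t) j v hv, smul_smul, hcadd, add_comm t s]
  have hcomm : ∀ (a : Centz σ) (t : ℝ), Commute (D t) (ρ a) := by
    intro a t
    apply Units.ext
    apply end_ext htop
    intro j v hv
    rw [Units.val_mul, Units.val_mul, Module.End.mul_apply, Module.End.mul_apply,
      hDapply t j v hv, map_smul, hDapply t j _ (hinv j a v hv)]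
  let F : Centz σ × Multiplicative ℝ →* (Module.End ℂ V)ˣ :=
    MonoidHom.mk' (fun p => D (Multiplicative.toAdd p.2) * ρ p.1) (by
      rintro ⟨a, s⟩ ⟨b, t⟩
      simp only [Prod.fst_mul, Prod.snd_mul, toAdd_mul, map_mul]
      rw [hDadd]
      exact (hcomm a (Multiplicative.toAdd t)).mul_mul_mul_comm _ _)
  have hFdef : ∀ (a : Centz σ) (s : Multiplicative ℝ),
      F (a, s) = D (Multiplicative.toAdd s) * ρ a := fun _ _ => rfl
  have hFval : ∀ (a : Centz σ) (t : ℝ) (j : J), ∀ v ∈ Vj j,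
      (F (a, Multiplicative.ofAdd t) : Module.End ℂ V) v
        = c j t • ((ρ a : Module.End ℂ V) v) := by
    intro a t j v hv
    rw [hFdef, Units.val_mul, Module.End.mul_apply]
    simp only [toAdd_ofAdd]
    exact hDapply t j _ (hinv j a v hv)
  have hFgen : F (genN σ) = 1 := by
    apply Units.ext
    apply end_ext htop
    intro j v hv
    have h1 : (F (genN σ) : Module.End ℂ V) v
        = c j (-1) • ((ρ (gC σ) : Module.End ℂ V) v) := hFval (gC σ) (-1) j v hv
    rw [h1, hσact j v hv, smul_smul, Units.val_one, Module.End.one_apply]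
    have h2 : Complex.exp (2 * (Real.pi : ℂ) * Complex.I * (m j : ℂ) / (l : ℂ)) = c j 1 := by
      rw [hcdef]; norm_num
    rw [h2, hcadd]
    norm_num [hc0]
  have htrivN : ∀ n ∈ Ng σ, F n = 1 := by
    intro n hn
    obtain ⟨k, rfl⟩ := Subgroup.mem_zpowers_iff.mp hn
    rw [map_zpow, hFgen, one_zpow]
  have hNle : Ng σ ≤ F.ker := fun n hn => htrivN n hn
  set ψ : Lam σ →* (Module.End ℂ V)ˣ := QuotientGroup.lift (Ng σ) F hNle with hψdef
  have hψmk : ∀ (a : Centz σ) (s : Multiplicative ℝ),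
      ψ (QuotientGroup.mk (a, s)) = F (a, s) := fun _ _ => rfl
  -- nonzero vector in Vj j₀
  obtain ⟨v₀, hv₀m, hv₀⟩ := Submodule.exists_mem_ne_zero_of_ne_bot hj₀
  have smul_cancel : ∀ {x : ℂ} {v : V}, v ≠ 0 → x • v = v → x = 1 := by
    intro x v hv h
    have h2 : (x - 1) • v = 0 := by rw [sub_smul, one_smul, h, sub_self]
    rcases smul_eq_zero.mp h2 with h3 | h3
    · exact sub_eq_zero.mp h3
    · exact absurd h3 hv
  -- m j₀ = l
  have hmj0 : (m j₀ : ℂ) = (l : ℂ) := by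
    have h1 : Complex.exp (2 * (Real.pi : ℂ) * Complex.I * (m j₀ : ℂ) / (l : ℂ)) • v₀ = v₀ := by
      rw [← hσact j₀ v₀ hv₀m, htriv _ _ hv₀m]
    obtain ⟨k, hk⟩ := Complex.exp_eq_one_iff.mp (smul_cancel hv₀ h1)
    have hk2 : (m j₀ : ℂ) = (k : ℂ) * l := by
      field_simp at hk
      have := mul_left_cancel₀ Complex.two_pi_I_ne_zero
        (by linear_combination (2 * (Real.pi : ℂ) * Complex.I) * hk :
          (2 * (Real.pi : ℂ) * Complex.I) * (m j₀ : ℂ)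
            = (2 * (Real.pi : ℂ) * Complex.I) * ((k : ℂ) * l))
      exact this
    have hk3 : (m j₀ : ℤ) = k * l := by exact_mod_cast hk2
    have hb1 : 1 ≤ m j₀ := (hm j₀).1
    have hb2 : m j₀ ≤ l := (hm j₀).2
    have hk1 : k = 1 := by
      have h1 : (1 : ℤ) ≤ m j₀ := by exact_mod_cast hb1
      have h2 : (m j₀ : ℤ) ≤ l := by exact_mod_cast hb2
      have hl1 : (1 : ℤ) ≤ l := by exact_mod_cast hl0
      nlinarith
    have : (m j₀ : ℤ) = l := by rw [hk3, hk1, one_mul]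
    exact_mod_cast this
  -- D 1 = ρ σ
  have hD1 : D 1 = ρ (gC σ) := by
    apply Units.ext
    apply end_ext htop
    intro j v hv
    rw [hDapply 1 j v hv, hσact j v hv, hcdef]
    norm_num
  -- hom structure of D in t
  let Dhom : Multiplicative ℝ →* (Module.End ℂ V)ˣ :=
    MonoidHom.mk' (fun s => D (Multiplicative.toAdd s)) (fun x y => hDadd _ _)
  have hDn : ∀ n : ℤ, D ((n : ℤ) : ℝ) = ρ ((gC σ) ^ n) := by
    intro n
    have h1 : (Multiplicative.ofAdd (1 : ℝ)) ^ n = Multiplicative.ofAdd ((n : ℝ)) := by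
      apply Multiplicative.toAdd.injective
      rw [toAdd_zpow]
      simp
    have h2 : Dhom ((Multiplicative.ofAdd (1 : ℝ)) ^ n)
        = (Dhom (Multiplicative.ofAdd (1 : ℝ))) ^ n := map_zpow Dhom _ n
    have h3 : Dhom (Multiplicative.ofAdd ((n : ℝ))) = D ((n : ℤ) : ℝ) := rfl
    have h4 : Dhom (Multiplicative.ofAdd (1 : ℝ)) = D 1 := rfl
    rw [← h3, ← h1, h2, h4, hD1, ← map_zpow]
  refine ⟨F, hFval, htrivN, ψ, fun a t j v hv => hFval a t j v hv, ?_⟩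
  refine (injective_iff_map_eq_one ψ).mpr ?_
  intro x
  refine QuotientGroup.induction_on x ?_
  rintro ⟨a, s⟩ hx
  have hF1 : F (a, s) = 1 := hx
  set t : ℝ := Multiplicative.toAdd s with hts
  have hsofAdd : s = Multiplicative.ofAdd t := rfl
  -- scalar on Vj j₀ is 1
  have h1 : c j₀ t • v₀ = v₀ := by
    have h2 := congrArg (fun u : (Module.End ℂ V)ˣ => (u : Module.End ℂ V) v₀) hF1
    simp only [Units.val_one, Module.End.one_apply] at h2
    rw [hsofAdd] at h2
    rw [hFval a t j₀ v₀ hv₀m, htriv a v₀ hv₀m] at h2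
    exact h2
  have h2 : c j₀ t = 1 := smul_cancel hv₀ h1
  -- t is an integer
  rw [hcdef, hmj0] at h2
  obtain ⟨n, hn⟩ := Complex.exp_eq_one_iff.mp h2
  have htn : t = (n : ℝ) := by
    have h3 : (t : ℂ) * (2 * (Real.pi : ℂ) * Complex.I)
        = (n : ℂ) * (2 * (Real.pi : ℂ) * Complex.I) := by
      have h3' : ((t : ℂ) * (2 * (Real.pi : ℂ) * Complex.I)) * (l : ℂ)
          = ((n : ℂ) * (2 * (Real.pi : ℂ) * Complex.I)) * (l : ℂ) := by
        field_simp at hn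
        linear_combination (2 * (Real.pi : ℂ) * Complex.I * (l : ℂ)) * hn
      exact mul_right_cancel₀ hlC h3'
    have h4 : (t : ℂ) = (n : ℂ) := mul_right_cancel₀ Complex.two_pi_I_ne_zero h3
    exact_mod_cast h4
  -- conclude a = (gC σ) ^ (-n)
  have h5 : ρ ((gC σ) ^ n * a) = 1 := by
    rw [map_mul, ← hDn n, ← htn, ← hF1, hFdef, hts]
  have h6 : (gC σ) ^ n * a = 1 := hρ (by rw [h5, map_one])
  have ha : a = (gC σ) ^ (-n) := by
    rw [zpow_neg]
    exact eq_inv_of_mul_eq_one_right h6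
  rw [QuotientGroup.eq_one_iff]
  refine ⟨-n, ?_⟩
  have hsnd : (Multiplicative.ofAdd (-1 : ℝ)) ^ (-n) = s := by
    apply Multiplicative.toAdd.injective
    rw [toAdd_zpow, toAdd_ofAdd]
    rw [show Multiplicative.toAdd s = t from rfl, htn]
    push_cast [zsmul_eq_mul]
    ring
  have hfst : (gC σ) ^ (-n) = a := ha.symm
  show genN σ ^ (-n) = (a, s)
  have hcomp : genN σ ^ (-n)
      = ((gC σ) ^ (-n), (Multiplicative.ofAdd (-1 : ℝ)) ^ (-n)) := rfl
  rw [hcomp, hfst, hsnd]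


end QEC
end

section
/- Let G be a group and σ ∈ G an element of order l. Let V be a nonzero finite-dimensional complex vector space and ρ : C_G(σ) → GL(V) an injective group homomorphism. Suppose V = ⨁_{j∈J} V_j is a direct sum decomposition into ρ-invariant subspaces (J a finite index set) such that for each j there is an integer m_j ∈ {1, …, l} with ρ(σ)v = e^{2πi m_j/l}·v for all v ∈ V_j. Then the map C_G(σ) × ℝ → GL(V ⊕ V) sending (a, t) to the operator acting on the first-summand copy of each V_j by v ↦ e^{2πi m_j t/l}·ρ(a)v and on the second-summand copy of each V_j by v ↦ e^{2πi (m_j/l − 1)t}·ρ(a)v is a group homomorphism trivial on N_σ, and the induced representation of Λ_G(σ) on V ⊕ V is faithful (injective). -/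
section AuxQEC

variable {V : Type*} [AddCommGroup V] [Module ℂ V]
variable {J : Type*} [DecidableEq J] (Vj : J → Submodule ℂ V)

/-- The scalar operator acting on `Vj j` by `c j`. -/
noncomputable def Sop (hdec : DirectSum.IsInternal Vj) (c : J → ℂ) : Module.End ℂ V :=
  (DirectSum.toModule ℂ J V (fun j => c j • (Vj j).subtype)).comp
    (LinearEquiv.ofBijective (DirectSum.coeLinearMap Vj) hdec).symm.toLinearMap

lemma Sop_apply_mem (hdec : DirectSum.IsInternal Vj) (c : J → ℂ) (j : J) (v : V)
    (hv : v ∈ Vj j) : Sop Vj hdec c v = c j • v := by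
  have h1 : (LinearEquiv.ofBijective (DirectSum.coeLinearMap Vj) hdec).symm v
      = DirectSum.lof ℂ J (fun j => Vj j) j ⟨v, hv⟩ := by
    rw [LinearEquiv.symm_apply_eq]
    simp [DirectSum.lof_eq_of, DirectSum.coeLinearMap_of]
    exact (show DirectSum.coeLinearMap Vj (DirectSum.of (fun j => ↥(Vj j)) j ⟨v, hv⟩) = v from
      DirectSum.coeLinearMap_of ..).symm
  show (DirectSum.toModule ℂ J V (fun j => c j • (Vj j).subtype))
      ((LinearEquiv.ofBijective (DirectSum.coeLinearMap Vj) hdec).symm v) = c j • v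
  rw [h1, DirectSum.toModule_lof]
  rfl

lemma End_ext_on (hdec : DirectSum.IsInternal Vj) (f g : Module.End ℂ V)
    (h : ∀ j, ∀ v ∈ Vj j, f v = g v) : f = g := by
  ext v
  have hv : v ∈ (⊤ : Submodule ℂ V) := trivial
  rw [← hdec.submodule_iSup_eq_top] at hv
  refine Submodule.iSup_induction (motive := fun v => f v = g v) Vj hv (fun j x hx => h j x hx) (by simp)
    (fun x y hx hy => by show f (x + y) = g (x + y); rw [map_add, map_add, hx, hy])

lemma Sop_mul (hdec : DirectSum.IsInternal Vj) (c d : J → ℂ) :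
    Sop Vj hdec c * Sop Vj hdec d = Sop Vj hdec (fun j => c j * d j) := by
  refine End_ext_on Vj hdec _ _ (fun j v hv => ?_)
  have h1 : (Sop Vj hdec c * Sop Vj hdec d) v = Sop Vj hdec c (Sop Vj hdec d v) := rfl
  rw [h1, Sop_apply_mem Vj hdec d j v hv, map_smul,
    Sop_apply_mem Vj hdec c j v hv, Sop_apply_mem Vj hdec _ j v hv, smul_smul, mul_comm]

lemma Sop_one (hdec : DirectSum.IsInternal Vj) : Sop Vj hdec (fun _ => 1) = 1 := by
  refine End_ext_on Vj hdec _ _ (fun j v hv => ?_)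
  rw [Sop_apply_mem Vj hdec _ j v hv, one_smul]
  rfl

lemma Sop_comm (hdec : DirectSum.IsInternal Vj) (c : J → ℂ) (f : Module.End ℂ V)
    (hf : ∀ j, ∀ v ∈ Vj j, f v ∈ Vj j) :
    Sop Vj hdec c * f = f * Sop Vj hdec c := by
  refine End_ext_on Vj hdec _ _ (fun j v hv => ?_)
  show Sop Vj hdec c (f v) = f (Sop Vj hdec c v)
  rw [Sop_apply_mem Vj hdec c j _ (hf j v hv), Sop_apply_mem Vj hdec c j v hv, map_smul]

lemma Sop_mul_neg (hdec : DirectSum.IsInternal Vj) (c : ℝ → J → ℂ) (h0 : ∀ j, c 0 j = 1)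
    (hadd : ∀ t s j, c t j * c s j = c (t + s) j) (t : ℝ) :
    Sop Vj hdec (c t) * Sop Vj hdec (c (-t)) = 1 := by
  rw [Sop_mul]
  have h : (fun j => c t j * c (-t) j) = fun _ => 1 := by
    funext j; rw [hadd, add_neg_cancel, h0]
  rw [h, Sop_one]

lemma Sop_c_add (hdec : DirectSum.IsInternal Vj) (c : ℝ → J → ℂ)
    (hadd : ∀ t s j, c t j * c s j = c (t + s) j) (t s : ℝ) :
    Sop Vj hdec (c t) * Sop Vj hdec (c s) = Sop Vj hdec (c (t + s)) := by
  have h : (fun j => c t j * c s j) = c (t + s) := funext (fun j => hadd t s j)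
  rw [Sop_mul, h]

/-- The invertible scalar operator as a unit. -/
noncomputable def SopUnit (hdec : DirectSum.IsInternal Vj) (c : ℝ → J → ℂ) (h0 : ∀ j, c 0 j = 1)
    (hadd : ∀ t s j, c t j * c s j = c (t + s) j) (t : ℝ) : (Module.End ℂ V)ˣ :=
  ⟨Sop Vj hdec (c t), Sop Vj hdec (c (-t)),
    Sop_mul_neg Vj hdec c h0 hadd t,
    by have := Sop_mul_neg Vj hdec c h0 hadd (-t); rwa [neg_neg] at this⟩

/-- The one-parameter family of scalar operators, as a monoid hom. -/
noncomputable def SopHom (hdec : DirectSum.IsInternal Vj) (c : ℝ → J → ℂ) (h0 : ∀ j, c 0 j = 1)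
    (hadd : ∀ t s j, c t j * c s j = c (t + s) j) :
    Multiplicative ℝ →* (Module.End ℂ V)ˣ :=
  MonoidHom.mk'
    (fun t => SopUnit Vj hdec c h0 hadd t.toAdd)
    (fun x y => Units.ext (Sop_c_add Vj hdec c hadd x.toAdd y.toAdd).symm)

lemma SopHom_val (hdec : DirectSum.IsInternal Vj) (c : ℝ → J → ℂ) (h0 : ∀ j, c 0 j = 1)
    (hadd : ∀ t s j, c t j * c s j = c (t + s) j) (t : ℝ) :
    (SopHom Vj hdec c h0 hadd (Multiplicative.ofAdd t) : Module.End ℂ V)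
      = Sop Vj hdec (c t) := rfl

lemma exists_ne_zero_mem (hdec : DirectSum.IsInternal Vj) [Nontrivial V] :
    ∃ j v, v ∈ Vj j ∧ v ≠ 0 := by
  by_contra h
  push_neg at h
  have hbot : ∀ j, Vj j = ⊥ := fun j => by
    rw [Submodule.eq_bot_iff]
    exact fun v hv => h j v hv
  have htop : (⊤ : Submodule ℂ V) = ⊥ := by
    rw [← hdec.submodule_iSup_eq_top, iSup_eq_bot]
    exact hbot
  obtain ⟨x, y, hxy⟩ := exists_pair_ne V
  apply hxy
  have hx : x ∈ (⊤ : Submodule ℂ V) := trivial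
  have hy : y ∈ (⊤ : Submodule ℂ V) := trivial
  rw [htop, Submodule.mem_bot] at hx hy
  rw [hx, hy]

/-- The scalar family for the first factor. -/
noncomputable def cf {J : Type*} (l : ℕ) (m : J → ℕ) (t : ℝ) (j : J) : ℂ :=
  Complex.exp (2 * (Real.pi : ℂ) * Complex.I * (m j : ℂ) * (t : ℂ) / (l : ℂ))

/-- The scalar family for the second factor. -/
noncomputable def df {J : Type*} (l : ℕ) (m : J → ℕ) (t : ℝ) (j : J) : ℂ :=
  Complex.exp (2 * (Real.pi : ℂ) * Complex.I * ((m j : ℂ) / (l : ℂ) - 1) * (t : ℂ))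

lemma cf_zero {J : Type*} (l : ℕ) (m : J → ℕ) (j : J) : cf l m 0 j = 1 := by
  simp [cf]

lemma df_zero {J : Type*} (l : ℕ) (m : J → ℕ) (j : J) : df l m 0 j = 1 := by
  simp [df]

lemma cf_add {J : Type*} (l : ℕ) (m : J → ℕ) (t s : ℝ) (j : J) :
    cf l m t j * cf l m s j = cf l m (t + s) j := by
  rw [cf, cf, cf, ← Complex.exp_add]
  congr 1
  push_cast
  ring

lemma df_add {J : Type*} (l : ℕ) (m : J → ℕ) (t s : ℝ) (j : J) :
    df l m t j * df l m s j = df l m (t + s) j := by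
  rw [df, df, df, ← Complex.exp_add]
  congr 1
  push_cast
  ring

lemma df_eq {J : Type*} (l : ℕ) (m : J → ℕ) (hl : (l : ℂ) ≠ 0) (t : ℝ) (j : J) :
    df l m t j = Complex.exp (-(2 * (Real.pi : ℂ) * Complex.I * (t : ℂ))) * cf l m t j := by
  rw [df, cf, ← Complex.exp_add]
  congr 1
  field_simp
  ring

lemma prod_zpow {M N : Type*} [Group M] [Group N] (x : M × N) (n : ℤ) :
    x ^ n = (x.1 ^ n, x.2 ^ n) :=
  Prod.ext (map_zpow (MonoidHom.fst M N) x n) (map_zpow (MonoidHom.snd M N) x n)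

end AuxQEC



namespace QEC

variable {G : Type*} [Group G]

/-- With `ρ : C_G(σ) → GL(V)` faithful, `V ≠ 0`, and `V = ⨁_j V_j`
as before, the map sending `(a, t)` to the operator on `V ⊕ V` acting on the first copy
of `V_j` by `e^{2πi m_j t/l}·ρ(a)` and on the second copy by `e^{2πi(m_j/l − 1)t}·ρ(a)`
is a homomorphism trivial on `N_σ`, and the induced representation of `Λ_G(σ)` on
`V ⊕ V` is faithful. -/
theorem statement11 {G : Type*} [Group G] (σ : G) (l : ℕ)
    (hl : orderOf σ = l) (hl0 : 0 < l)
    {V : Type*} [AddCommGroup V] [Module ℂ V] [FiniteDimensional ℂ V] [Nontrivial V]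
    {J : Type*} [Fintype J] [DecidableEq J] (Vj : J → Submodule ℂ V)
    (hdec : DirectSum.IsInternal Vj)
    (ρ : Centz σ →* (Module.End ℂ V)ˣ) (hρ : Function.Injective ρ)
    (hinv : ∀ (j : J) (a : Centz σ), ∀ v ∈ Vj j, (ρ a : Module.End ℂ V) v ∈ Vj j)
    (m : J → ℕ) (hm : ∀ j, 1 ≤ m j ∧ m j ≤ l)
    (hσact : ∀ j, ∀ v ∈ Vj j, (ρ (gC σ) : Module.End ℂ V) v
        = Complex.exp (2 * (Real.pi : ℂ) * Complex.I * (m j : ℂ) / (l : ℂ)) • v) :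
    ∃ F : Centz σ × Multiplicative ℝ →* (Module.End ℂ (V × V))ˣ,
      (∀ (a : Centz σ) (t : ℝ) (j : J), ∀ v ∈ Vj j,
        (F (a, Multiplicative.ofAdd t) : Module.End ℂ (V × V)) (v, 0)
            = (Complex.exp (2 * (Real.pi : ℂ) * Complex.I * (m j : ℂ) * (t : ℂ) / (l : ℂ))
                • ((ρ a : Module.End ℂ V) v), 0)
        ∧ (F (a, Multiplicative.ofAdd t) : Module.End ℂ (V × V)) (0, v)
            = (0, Complex.exp (2 * (Real.pi : ℂ) * Complex.I
                    * ((m j : ℂ) / (l : ℂ) - 1) * (t : ℂ))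
                • ((ρ a : Module.End ℂ V) v)))
      ∧ (∀ n ∈ Ng σ, F n = 1)
      ∧ ∃ ψ : Lam σ →* (Module.End ℂ (V × V))ˣ,
          (∀ (a : Centz σ) (t : ℝ) (j : J), ∀ v ∈ Vj j,
            (ψ (lmk σ a t) : Module.End ℂ (V × V)) (v, 0)
                = (Complex.exp (2 * (Real.pi : ℂ) * Complex.I * (m j : ℂ) * (t : ℂ) / (l : ℂ))
                    • ((ρ a : Module.End ℂ V) v), 0)
            ∧ (ψ (lmk σ a t) : Module.End ℂ (V × V)) (0, v)
                = (0, Complex.exp (2 * (Real.pi : ℂ) * Complex.I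
                        * ((m j : ℂ) / (l : ℂ) - 1) * (t : ℂ))
                    • ((ρ a : Module.End ℂ V) v)))
          ∧ Function.Injective ψ := by
  classical
  have hlC : (l : ℂ) ≠ 0 := Nat.cast_ne_zero.mpr hl0.ne'
  set U : Multiplicative ℝ →* (Module.End ℂ V)ˣ :=
    SopHom Vj hdec (cf l m) (cf_zero l m) (cf_add l m) with hUdef
  set W : Multiplicative ℝ →* (Module.End ℂ V)ˣ :=
    SopHom Vj hdec (df l m) (df_zero l m) (df_add l m) with hWdef
  have hcomm : ∀ (cc : J → ℂ) (a : Centz σ),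
      Sop Vj hdec cc * ((ρ a : (Module.End ℂ V)ˣ) : Module.End ℂ V)
        = ((ρ a : (Module.End ℂ V)ˣ) : Module.End ℂ V) * Sop Vj hdec cc :=
    fun cc a => Sop_comm Vj hdec cc _ (fun j v hv => hinv j a v hv)
  have hcommU : ∀ (a : Centz σ) (t : Multiplicative ℝ), Commute (ρ a) (U t) := fun a t => by
    apply Units.ext
    rw [Units.val_mul, Units.val_mul]
    exact (hcomm (cf l m t.toAdd) a).symm
  have hcommW : ∀ (a : Centz σ) (t : Multiplicative ℝ), Commute (ρ a) (W t) := fun a t => by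
    apply Units.ext
    rw [Units.val_mul, Units.val_mul]
    exact (hcomm (df l m t.toAdd) a).symm
  set F1 : Centz σ × Multiplicative ℝ →* (Module.End ℂ V)ˣ :=
    ρ.noncommCoprod U hcommU with hF1def
  set F2 : Centz σ × Multiplicative ℝ →* (Module.End ℂ V)ˣ :=
    ρ.noncommCoprod W hcommW with hF2def
  set P : (Module.End ℂ V)ˣ × (Module.End ℂ V)ˣ →* (Module.End ℂ (V × V))ˣ :=
    (Units.map (LinearMap.prodMapRingHom ℂ V V).toMonoidHom).comp
      MulEquiv.prodUnits.symm.toMonoidHom with hPdef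
  set F : Centz σ × Multiplicative ℝ →* (Module.End ℂ (V × V))ˣ :=
    P.comp (F1.prod F2) with hFdef
  -- value of F
  have hFval : ∀ (a : Centz σ) (τ : Multiplicative ℝ),
      (F (a, τ) : Module.End ℂ (V × V))
        = LinearMap.prodMap
            (((ρ a : (Module.End ℂ V)ˣ) : Module.End ℂ V) * Sop Vj hdec (cf l m τ.toAdd))
            (((ρ a : (Module.End ℂ V)ˣ) : Module.End ℂ V) * Sop Vj hdec (df l m τ.toAdd)) :=
    fun a τ => rfl
  -- the two spec equalities
  have hspec1 : ∀ (a : Centz σ) (t : ℝ) (j : J), ∀ v ∈ Vj j,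
      (F (a, Multiplicative.ofAdd t) : Module.End ℂ (V × V)) (v, 0)
        = (cf l m t j • ((ρ a : Module.End ℂ V) v), 0) := by
    intro a t j v hv
    rw [hFval]
    have h1 : (((ρ a : (Module.End ℂ V)ˣ) : Module.End ℂ V) * Sop Vj hdec (cf l m t)) v
        = cf l m t j • ((ρ a : Module.End ℂ V) v) := by
      show ((ρ a : (Module.End ℂ V)ˣ) : Module.End ℂ V) (Sop Vj hdec (cf l m t) v) = _
      rw [Sop_apply_mem Vj hdec (cf l m t) j v hv, map_smul]
    rw [LinearMap.prodMap_apply]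
    exact Prod.ext h1 (map_zero _)
  have hspec2 : ∀ (a : Centz σ) (t : ℝ) (j : J), ∀ v ∈ Vj j,
      (F (a, Multiplicative.ofAdd t) : Module.End ℂ (V × V)) (0, v)
        = (0, df l m t j • ((ρ a : Module.End ℂ V) v)) := by
    intro a t j v hv
    rw [hFval]
    have h1 : (((ρ a : (Module.End ℂ V)ˣ) : Module.End ℂ V) * Sop Vj hdec (df l m t)) v
        = df l m t j • ((ρ a : Module.End ℂ V) v) := by
      show ((ρ a : (Module.End ℂ V)ˣ) : Module.End ℂ V) (Sop Vj hdec (df l m t) v) = _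
      rw [Sop_apply_mem Vj hdec (df l m t) j v hv, map_smul]
    rw [LinearMap.prodMap_apply]
    exact Prod.ext (map_zero _) h1
  -- U and W at 1 coincide with ρ (gC σ)
  have hUone : U (Multiplicative.ofAdd (1 : ℝ)) = ρ (gC σ) := by
    apply Units.ext
    rw [SopHom_val]
    refine End_ext_on Vj hdec _ _ (fun j v hv => ?_)
    rw [Sop_apply_mem Vj hdec (cf l m 1) j v hv, hσact j v hv]
    congr 1
    rw [cf]
    norm_num
  have hexpm1 : Complex.exp (-(2 * (Real.pi : ℂ) * Complex.I * ((1 : ℝ) : ℂ))) = 1 := by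
    have h := Complex.exp_int_mul_two_pi_mul_I (-1)
    convert h using 2
    push_cast
    ring
  have hdf1 : df l m (1 : ℝ) = cf l m (1 : ℝ) := by
    funext j
    rw [df_eq l m hlC 1 j, hexpm1, one_mul]
  have hWone : W (Multiplicative.ofAdd (1 : ℝ)) = ρ (gC σ) := by
    apply Units.ext
    rw [SopHom_val, hdf1]
    have := congrArg Units.val hUone
    rw [SopHom_val] at this
    exact this
  -- U and W at integers
  have hofAddInt : ∀ k : ℤ, Multiplicative.ofAdd ((k : ℝ))
      = (Multiplicative.ofAdd (1 : ℝ)) ^ k := by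
    intro k
    rw [← ofAdd_zsmul]
    norm_num
  have hUz : ∀ k : ℤ, U (Multiplicative.ofAdd ((k : ℝ))) = ρ (gC σ ^ k) := by
    intro k
    rw [hofAddInt k, map_zpow, hUone, ← map_zpow]
  -- F kills the generator
  have hF1gen : F1 (genN σ) = 1 := by
    show ρ (gC σ) * U (Multiplicative.ofAdd (-1 : ℝ)) = 1
    rw [ofAdd_neg, map_inv, hUone, mul_inv_cancel]
  have hF2gen : F2 (genN σ) = 1 := by
    show ρ (gC σ) * W (Multiplicative.ofAdd (-1 : ℝ)) = 1
    rw [ofAdd_neg, map_inv, hWone, mul_inv_cancel]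
  have hFgen : F (genN σ) = 1 := by
    show P (F1 (genN σ), F2 (genN σ)) = 1
    rw [hF1gen, hF2gen]
    exact map_one P
  have hker : ∀ n ∈ Ng σ, F n = 1 := by
    intro n hn
    obtain ⟨k, rfl⟩ := Subgroup.mem_zpowers_iff.mp hn
    rw [map_zpow, hFgen, one_zpow]
  -- kernel of F is contained in Ng σ
  have hker2 : ∀ p : Centz σ × Multiplicative ℝ, F p = 1 → p ∈ Ng σ := by
    rintro ⟨a, τ⟩ hp
    set t : ℝ := τ.toAdd with htdef
    have hτ : τ = Multiplicative.ofAdd t := rfl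
    have hval : LinearMap.prodMap
        (((ρ a : (Module.End ℂ V)ˣ) : Module.End ℂ V) * Sop Vj hdec (cf l m t))
        (((ρ a : (Module.End ℂ V)ˣ) : Module.End ℂ V) * Sop Vj hdec (df l m t)) = 1 := by
      have h := congrArg Units.val hp
      rw [hFval a τ] at h
      exact h
    have hA : ∀ v : V,
        ((ρ a : Module.End ℂ V) * Sop Vj hdec (cf l m t)) v = v := fun v => by
      have h := LinearMap.congr_fun hval (v, 0)
      have h2 := congrArg Prod.fst h
      simpa [LinearMap.prodMap_apply] using h2
    have hB : ∀ v : V,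
        ((ρ a : Module.End ℂ V) * Sop Vj hdec (df l m t)) v = v := fun v => by
      have h := LinearMap.congr_fun hval (0, v)
      have h2 := congrArg Prod.snd h
      simpa [LinearMap.prodMap_apply] using h2
    obtain ⟨j, v, hv, hv0⟩ := exists_ne_zero_mem Vj hdec
    have hinj : Function.Injective ((ρ a : (Module.End ℂ V)ˣ) : Module.End ℂ V) :=
      ((Module.End.isUnit_iff _).mp (ρ a).isUnit).injective
    have h1 : (ρ a : Module.End ℂ V) (cf l m t j • v) = v := by
      have h := hA v
      rwa [show ((ρ a : Module.End ℂ V) * Sop Vj hdec (cf l m t)) v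
          = (ρ a : Module.End ℂ V) (Sop Vj hdec (cf l m t) v) from rfl,
        Sop_apply_mem Vj hdec (cf l m t) j v hv] at h
    have h2 : (ρ a : Module.End ℂ V) (df l m t j • v) = v := by
      have h := hB v
      rwa [show ((ρ a : Module.End ℂ V) * Sop Vj hdec (df l m t)) v
          = (ρ a : Module.End ℂ V) (Sop Vj hdec (df l m t) v) from rfl,
        Sop_apply_mem Vj hdec (df l m t) j v hv] at h
    have h3 : cf l m t j = df l m t j := by
      have h4 : cf l m t j • v = df l m t j • v := hinj (h1.trans h2.symm)
      have h5 : (cf l m t j - df l m t j) • v = 0 := by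
        rw [sub_smul, h4, sub_self]
      rcases smul_eq_zero.mp h5 with h6 | h6
      · exact sub_eq_zero.mp h6
      · exact absurd h6 hv0
    have hcne : cf l m t j ≠ 0 := Complex.exp_ne_zero _
    have h7 : Complex.exp (-(2 * (Real.pi : ℂ) * Complex.I * (t : ℂ))) = 1 := by
      have h8 := h3
      rw [df_eq l m hlC t j] at h8
      have h9 : Complex.exp (-(2 * (Real.pi : ℂ) * Complex.I * (t : ℂ))) * cf l m t j
          = 1 * cf l m t j := by rw [one_mul]; exact h8.symm
      exact mul_right_cancel₀ hcne h9
    obtain ⟨n, hn⟩ := Complex.exp_eq_one_iff.mp h7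
    have h10 : (t : ℂ) = ((-n : ℤ) : ℂ) := by
      have h11 : (2 * (Real.pi : ℂ) * Complex.I) * (t : ℂ)
          = (2 * (Real.pi : ℂ) * Complex.I) * ((-n : ℤ) : ℂ) := by
        push_cast
        push_cast at hn
        linear_combination -hn
      exact mul_left_cancel₀ Complex.two_pi_I_ne_zero h11
    have ht : t = (((-n : ℤ) : ℝ)) := by
      have : ((t : ℝ) : ℂ) = ((((-n : ℤ) : ℝ)) : ℂ) := by push_cast; push_cast at h10; exact h10
      exact_mod_cast this
    -- F1 (a, τ) = 1
    have hAlin : (ρ a : Module.End ℂ V) * Sop Vj hdec (cf l m t) = 1 :=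
      LinearMap.ext fun v => hA v
    have hF1unit : ρ a * U τ = 1 := by
      apply Units.ext
      rw [Units.val_mul]
      exact hAlin
    have hUτ : U τ = ρ (gC σ ^ (-n)) := by
      rw [hτ, ht]
      exact hUz (-n)
    have h12 : a * gC σ ^ (-n) = 1 := by
      apply hρ
      rw [map_mul, map_one, ← hUτ]
      exact hF1unit
    have ha : a = gC σ ^ n := by
      rw [mul_eq_one_iff_eq_inv] at h12
      rw [h12, ← zpow_neg, neg_neg]
    refine Subgroup.mem_zpowers_iff.mpr ⟨n, ?_⟩
    rw [prod_zpow]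
    refine Prod.ext ?_ ?_
    · exact ha.symm
    · show (Multiplicative.ofAdd (-1 : ℝ)) ^ n = τ
      rw [hτ, ht, ← ofAdd_zsmul]
      norm_num
  -- assemble
  have hkerle : Ng σ ≤ F.ker := fun n hn => by rw [MonoidHom.mem_ker]; exact hker n hn
  set ψ : Lam σ →* (Module.End ℂ (V × V))ˣ := QuotientGroup.lift (Ng σ) F hkerle with hψdef
  have hψmk : ∀ p : Centz σ × Multiplicative ℝ, ψ (QuotientGroup.mk p) = F p :=
    fun p => QuotientGroup.lift_mk' (Ng σ) hkerle p
  refine ⟨F, fun a t j v hv => ⟨hspec1 a t j v hv, hspec2 a t j v hv⟩, hker, ψ, ?_, ?_⟩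
  · intro a t j v hv
    have he : ψ (lmk σ a t) = F (a, Multiplicative.ofAdd t) := hψmk _
    rw [he]
    exact ⟨hspec1 a t j v hv, hspec2 a t j v hv⟩
  · rw [injective_iff_map_eq_one]
    intro x hx
    obtain ⟨p, rfl⟩ := QuotientGroup.mk_surjective x
    rw [hψmk] at hx
    exact (QuotientGroup.eq_one_iff p).mpr (hker2 p hx)


end QEC
end

section
/- Let G be a group and σ ∈ G an element of order l. Let V be a nonzero finite-dimensional complex vector space and ρ : C_G(σ) → GL(V) an injective group homomorphism, with a direct sum decomposition V = ⨁_{j∈J} V_j into ρ-invariant subspaces (J finite) such that for each j there is m_j ∈ {1, …, l} with ρ(σ)v = e^{2πi m_j/l}·v on V_j. Let V* be the dual space with the contragredient action ρ*(a)f := f ∘ ρ(a)^{-1}, and for each j let W_j := {f ∈ V* : f vanishes on V_i for every i ≠ j}. Then: (a) V* = ⨁_j W_j, each W_j is invariant under every ρ*(a), and ρ*(σ) acts on W_j by the scalar e^{−2πi m_j/l}; (b) the map C_G(σ) × ℝ → GL(V ⊕ V*) sending (a, t) to the operator acting on V_j by v ↦ e^{2πi m_j t/l}·ρ(a)v and on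 W_j by f ↦ e^{2πi (1 − m_j/l)t}·ρ*(a)f is a group homomorphism trivial on N_σ, and the induced representation of Λ_G(σ) on V ⊕ V* is faithful (injective). -/
namespace QEC

variable {G : Type*} [Group G]

/-- The contragredient operator `ρ*(a) : f ↦ f ∘ ρ(a)⁻¹` on the dual space. -/
def rhoStar {G : Type*} [Group G] {g : G} {V : Type*} [AddCommGroup V] [Module ℂ V]
    (ρ : Centz g →* (Module.End ℂ V)ˣ) (a : Centz g) :
    Module.Dual ℂ V →ₗ[ℂ] Module.Dual ℂ V :=
  LinearMap.dualMap (((ρ a)⁻¹ : (Module.End ℂ V)ˣ) : Module.End ℂ V)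

/-- `W_j`: the functionals vanishing on every `V_i` with `i ≠ j`. -/
def dualPiece {V : Type*} [AddCommGroup V] [Module ℂ V] {J : Type*}
    (Vj : J → Submodule ℂ V) (j : J) : Submodule ℂ (Module.Dual ℂ V) where
  carrier := {f | ∀ i, i ≠ j → ∀ v ∈ Vj i, f v = 0}
  add_mem' := by
    intro f g hf hg i hi v hv
    simp [LinearMap.add_apply, hf i hi v hv, hg i hi v hv]
  zero_mem' := by intro i hi v hv; simp
  smul_mem' := by
    intro c f hf i hi v hv
    simp [LinearMap.smul_apply, hf i hi v hv]


set_option linter.unusedSectionVars false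
set_option maxHeartbeats 1000000

section Proj

variable {V : Type*} [AddCommGroup V] [Module ℂ V]
  {J : Type*} [Fintype J] [DecidableEq J] (Vj : J → Submodule ℂ V)
  (hdec : DirectSum.IsInternal Vj)

noncomputable def proj (j : J) : V →ₗ[ℂ] V :=
  (Vj j).subtype ∘ₗ (DirectSum.component ℂ J (fun i => (Vj i : Type _)) j) ∘ₗ
    (LinearEquiv.ofBijective (DirectSum.coeLinearMap Vj) hdec).symm.toLinearMap

lemma proj_mem (j : J) (v : V) : proj Vj hdec j v ∈ Vj j := (by exact Subtype.coe_prop _)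

lemma proj_apply_self {j : J} {v : V} (hv : v ∈ Vj j) : proj Vj hdec j v = v := by
  have h := hdec.ofBijective_coeLinearMap_of_mem hv
  simp only [proj, DirectSum.component, LinearMap.coe_comp, LinearEquiv.coe_coe,
    Function.comp_apply, LinearMap.coe_mk]
  exact congrArg Subtype.val h

lemma proj_apply_ne {i j : J} (hij : i ≠ j) {v : V} (hv : v ∈ Vj i) :
    proj Vj hdec j v = 0 := by
  have h := hdec.ofBijective_coeLinearMap_of_mem_ne hij hv
  simp only [proj, DirectSum.component, LinearMap.coe_comp, LinearEquiv.coe_coe,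
    Function.comp_apply, LinearMap.coe_mk]
  exact congrArg Subtype.val h

lemma sum_proj (v : V) : ∑ j, proj Vj hdec j v = v := by
  classical
  set e := LinearEquiv.ofBijective (DirectSum.coeLinearMap Vj) hdec with he
  conv_rhs => rw [show v = DirectSum.coeLinearMap Vj (e.symm v) from (e.apply_symm_apply v).symm]
  rw [← DirectSum.sum_univ_of (e.symm v), map_sum]
  refine Finset.sum_congr rfl fun j _ => ?_
  rw [DirectSum.coeLinearMap_of]
  rfl

include hdec in
/-- Two linear maps agreeing on each `Vj j` are equal. -/
lemma ext_pieces {W : Type*} [AddCommGroup W] [Module ℂ W] {A B : V →ₗ[ℂ] W}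
    (h : ∀ j, ∀ v ∈ Vj j, A v = B v) : A = B := by
  ext v
  have hs := sum_proj Vj hdec v
  calc A v = A (∑ j, proj Vj hdec j v) := by rw [hs]
    _ = ∑ j, A (proj Vj hdec j v) := by rw [map_sum]
    _ = ∑ j, B (proj Vj hdec j v) := Finset.sum_congr rfl fun j _ =>
        h j _ (proj_mem Vj hdec j v)
    _ = B (∑ j, proj Vj hdec j v) := (map_sum ..).symm
    _ = B v := by rw [hs]

end Proj



section Dual

variable {V : Type*} [AddCommGroup V] [Module ℂ V]
  {J : Type*} [Fintype J] [DecidableEq J] (Vj : J → Submodule ℂ V)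
  (hdec : DirectSum.IsInternal Vj)

noncomputable def dproj (j : J) : Module.Dual ℂ V →ₗ[ℂ] Module.Dual ℂ V :=
  (proj Vj hdec j).dualMap

lemma dproj_mem (j : J) (f : Module.Dual ℂ V) : dproj Vj hdec j f ∈ dualPiece Vj j := by
  intro i hi v hv
  show f (proj Vj hdec j v) = 0
  rw [proj_apply_ne Vj hdec hi hv, map_zero]

lemma dproj_apply_self {j : J} {f : Module.Dual ℂ V} (hf : f ∈ dualPiece Vj j) :
    dproj Vj hdec j f = f := by
  refine ext_pieces Vj hdec fun i v hv => ?_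
  show f (proj Vj hdec j v) = f v
  by_cases hij : i = j
  · subst hij; rw [proj_apply_self Vj hdec hv]
  · rw [proj_apply_ne Vj hdec hij hv, map_zero, hf i hij v hv]

lemma dproj_apply_ne {i j : J} (hij : i ≠ j) {f : Module.Dual ℂ V}
    (hf : f ∈ dualPiece Vj i) : dproj Vj hdec j f = 0 := by
  ext v
  show f (proj Vj hdec j v) = 0
  exact hf j (fun h => hij h.symm) _ (proj_mem Vj hdec j v)

lemma sum_dproj (f : Module.Dual ℂ V) : ∑ j, dproj Vj hdec j f = f := by
  ext v
  have : (∑ j, dproj Vj hdec j f) v = ∑ j, f (proj Vj hdec j v) := by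
    rw [LinearMap.sum_apply]; rfl
  rw [this, ← map_sum, sum_proj Vj hdec v]

include hdec in
lemma ext_dual {W : Type*} [AddCommGroup W] [Module ℂ W]
    {A B : Module.Dual ℂ V →ₗ[ℂ] W}
    (h : ∀ j, ∀ f ∈ dualPiece Vj j, A f = B f) : A = B := by
  ext f
  have hs := sum_dproj Vj hdec f
  calc A f = A (∑ j, dproj Vj hdec j f) := by rw [hs]
    _ = ∑ j, A (dproj Vj hdec j f) := by rw [map_sum]
    _ = ∑ j, B (dproj Vj hdec j f) := Finset.sum_congr rfl fun j _ =>
        h j _ (dproj_mem Vj hdec j f)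
    _ = B (∑ j, dproj Vj hdec j f) := (map_sum ..).symm
    _ = B f := by rw [hs]

include hdec in
lemma dualPiece_isInternal : DirectSum.IsInternal (dualPiece Vj) := by
  rw [DirectSum.isInternal_submodule_iff_iSupIndep_and_iSup_eq_top]
  constructor
  · rw [iSupIndep_def]
    intro j
    rw [Submodule.disjoint_def]
    intro f hfj hfsup
    have hann : (⨆ (i) (_ : i ≠ j), dualPiece Vj i) ≤ (Vj j).dualAnnihilator := by
      refine iSup_le fun i => iSup_le fun hij => ?_
      intro g hg
      rw [Submodule.mem_dualAnnihilator]
      exact fun w hw => hg j (fun h => hij h.symm) w hw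
    have hfj' : f ∈ (Vj j).dualAnnihilator := hann hfsup
    rw [Submodule.mem_dualAnnihilator] at hfj'
    -- f vanishes on all pieces
    ext v
    have : f v = ∑ i, f (proj Vj hdec i v) := by rw [← map_sum, sum_proj Vj hdec v]
    rw [this]
    refine (Finset.sum_eq_zero fun i _ => ?_)
    by_cases hij : i = j
    · subst hij; exact hfj' _ (proj_mem Vj hdec i v)
    · exact hfj i hij _ (proj_mem Vj hdec i v)
  · rw [eq_top_iff]
    intro f _
    rw [← sum_dproj Vj hdec f]
    exact Submodule.sum_mem _ fun j _ => Submodule.mem_iSup_of_mem j (dproj_mem Vj hdec j f)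

end Dual


section Rep

open Complex

variable {G : Type*} [Group G] {σ : G}
  {V : Type*} [AddCommGroup V] [Module ℂ V]
  {J : Type*} [Fintype J] [DecidableEq J] {Vj : J → Submodule ℂ V}
  (hdec : DirectSum.IsInternal Vj)
  (ρ : Centz σ →* (Module.End ℂ V)ˣ)
  (m : J → ℕ) (l : ℕ)

/-- scalar on `V_j` -/
noncomputable def eS (j : J) (t : ℝ) : ℂ :=
  Complex.exp (2 * (Real.pi : ℂ) * Complex.I * (m j : ℂ) * (t : ℂ) / (l : ℂ))

/-- scalar on `W_j` -/
noncomputable def dS (j : J) (t : ℝ) : ℂ :=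
  Complex.exp (2 * (Real.pi : ℂ) * Complex.I * (1 - (m j : ℂ) / (l : ℂ)) * (t : ℂ))

/-- eigenvalue of `σ` on `V_j` -/
noncomputable def cS (j : J) : ℂ :=
  Complex.exp (2 * (Real.pi : ℂ) * Complex.I * (m j : ℂ) / (l : ℂ))

lemma eS_add (j : J) (t s : ℝ) : eS m l j t * eS m l j s = eS m l j (t + s) := by
  rw [eS, eS, eS, ← Complex.exp_add]
  push_cast
  ring_nf

lemma dS_add (j : J) (t s : ℝ) : dS m l j t * dS m l j s = dS m l j (t + s) := by
  rw [dS, dS, dS, ← Complex.exp_add]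
  push_cast
  ring_nf

lemma eS_zero (j : J) : eS m l j 0 = 1 := by simp [eS]

lemma dS_zero (j : J) : dS m l j 0 = 1 := by simp [dS]

lemma eS_ne_zero (j : J) (t : ℝ) : eS m l j t ≠ 0 := Complex.exp_ne_zero _

lemma cS_ne_zero (j : J) : cS m l j ≠ 0 := Complex.exp_ne_zero _

lemma eS_neg_one_mul_cS (j : J) : eS m l j (-1) * cS m l j = 1 := by
  rw [eS, cS, ← Complex.exp_add, ← Complex.exp_zero]
  congr 1
  push_cast
  ring

lemma dS_mul_eS (j : J) (t : ℝ) :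
    dS m l j t * eS m l j t = Complex.exp (2 * (Real.pi : ℂ) * Complex.I * (t : ℂ)) := by
  rw [dS, eS, ← Complex.exp_add]
  congr 1
  ring

lemma eS_int (j : J) (n : ℤ) : eS m l j (n : ℝ) = cS m l j ^ n := by
  rw [eS, cS, ← Complex.exp_int_mul]
  congr 1
  push_cast
  ring

/-- the inverse of `σ` acts on `V_j` by the inverse scalar -/
lemma unit_inv_act {u : (Module.End ℂ V)ˣ} {c : ℂ} (hc : c ≠ 0) {v : V}
    (h : (u : Module.End ℂ V) v = c • v) :
    ((u⁻¹ : (Module.End ℂ V)ˣ) : Module.End ℂ V) v = c⁻¹ • v := by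
  have h2 : ((u⁻¹ : (Module.End ℂ V)ˣ) : Module.End ℂ V) ((u : Module.End ℂ V) v) = v := by
    rw [← Module.End.mul_apply, ← Units.val_mul, inv_mul_cancel]; rfl
  rw [h, map_smul] at h2
  calc ((u⁻¹ : (Module.End ℂ V)ˣ) : Module.End ℂ V) v
      = c⁻¹ • (c • ((u⁻¹ : (Module.End ℂ V)ˣ) : Module.End ℂ V) v) := by
        rw [smul_smul, inv_mul_cancel₀ hc, one_smul]
    _ = c⁻¹ • v := by rw [h2]

section act

variable (hinv : ∀ (j : J) (a : Centz σ), ∀ v ∈ Vj j, (ρ a : Module.End ℂ V) v ∈ Vj j)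
  (hσact : ∀ j, ∀ v ∈ Vj j, (ρ (gC σ) : Module.End ℂ V) v = cS m l j • v)

include hinv in
lemma hinv_inv (j : J) (a : Centz σ) {v : V} (hv : v ∈ Vj j) :
    (((ρ a)⁻¹ : (Module.End ℂ V)ˣ) : Module.End ℂ V) v ∈ Vj j := by
  rw [← map_inv]
  exact hinv j a⁻¹ v hv

lemma rhoStar_apply (a : Centz σ) (f : Module.Dual ℂ V) (v : V) :
    rhoStar ρ a f v = f ((((ρ a)⁻¹ : (Module.End ℂ V)ˣ) : Module.End ℂ V) v) := rfl

include hinv in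
lemma rhoStar_mem (j : J) (a : Centz σ) {f : Module.Dual ℂ V} (hf : f ∈ dualPiece Vj j) :
    rhoStar ρ a f ∈ dualPiece Vj j := by
  intro i hi v hv
  rw [rhoStar_apply]
  exact hf i hi _ (hinv_inv ρ hinv i a hv)

lemma rhoStar_mul (a b : Centz σ) (f : Module.Dual ℂ V) :
    rhoStar ρ (a * b) f = rhoStar ρ a (rhoStar ρ b f) := by
  ext v
  rw [rhoStar_apply, rhoStar_apply, rhoStar_apply, map_mul, mul_inv_rev, Units.val_mul,
    Module.End.mul_apply]

lemma rhoStar_one (f : Module.Dual ℂ V) : rhoStar ρ 1 f = f := by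
  ext v
  rw [rhoStar_apply, map_one, inv_one, Units.val_one]
  rfl

include hdec hσact in
lemma rhoStar_sigma {j : J} {f : Module.Dual ℂ V} (hf : f ∈ dualPiece Vj j) :
    rhoStar ρ (gC σ) f = (cS m l j)⁻¹ • f := by
  refine ext_pieces Vj hdec fun i v hv => ?_
  rw [rhoStar_apply, unit_inv_act (cS_ne_zero m l i) (hσact i v hv), map_smul]
  by_cases hij : i = j
  · subst hij; rfl
  · show (cS m l i)⁻¹ * f v = (cS m l j)⁻¹ * f v
    rw [hf i hij v hv, mul_zero, mul_zero]

/-- The operator on `V`. -/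
noncomputable def Aop (a : Centz σ) (t : ℝ) : V →ₗ[ℂ] V :=
  (ρ a : Module.End ℂ V) ∘ₗ ∑ j, eS m l j t • proj Vj hdec j

lemma Aop_apply (a : Centz σ) (t : ℝ) {j : J} {v : V} (hv : v ∈ Vj j) :
    Aop hdec ρ m l a t v = eS m l j t • (ρ a : Module.End ℂ V) v := by
  have hsum : (∑ i, eS m l i t • proj Vj hdec i) v = eS m l j t • v := by
    rw [LinearMap.sum_apply, Finset.sum_eq_single j]
    · rw [LinearMap.smul_apply, proj_apply_self Vj hdec hv]
    · intro i _ hij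
      rw [LinearMap.smul_apply, proj_apply_ne Vj hdec hij.symm hv, smul_zero]
    · intro h; exact absurd (Finset.mem_univ j) h
  rw [Aop, LinearMap.comp_apply, hsum, map_smul]

include hinv in
lemma Aop_mem (a : Centz σ) (t : ℝ) {j : J} {v : V} (hv : v ∈ Vj j) :
    Aop hdec ρ m l a t v ∈ Vj j := by
  rw [Aop_apply hdec ρ m l a t hv]
  exact Submodule.smul_mem _ _ (hinv j a v hv)

include hinv in
lemma Aop_mul (a b : Centz σ) (t s : ℝ) :
    Aop hdec ρ m l a t ∘ₗ Aop hdec ρ m l b s = Aop hdec ρ m l (a * b) (t + s) := by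
  refine ext_pieces Vj hdec fun j v hv => ?_
  rw [LinearMap.comp_apply, Aop_apply hdec ρ m l b s hv,
    map_smul, Aop_apply hdec ρ m l a t (hinv j b v hv),
    Aop_apply hdec ρ m l (a * b) (t + s) hv, smul_smul, mul_comm (eS m l j s),
    eS_add, map_mul, Units.val_mul, Module.End.mul_apply]

lemma Aop_one : Aop hdec ρ m l 1 0 = LinearMap.id := by
  refine ext_pieces Vj hdec fun j v hv => ?_
  rw [Aop_apply hdec ρ m l 1 0 hv, eS_zero, one_smul, map_one, Units.val_one]
  rfl

/-- The operator on the dual. -/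
noncomputable def Dop (a : Centz σ) (t : ℝ) : Module.Dual ℂ V →ₗ[ℂ] Module.Dual ℂ V :=
  (rhoStar ρ a) ∘ₗ ∑ j, dS m l j t • dproj Vj hdec j

lemma Dop_apply (a : Centz σ) (t : ℝ) {j : J} {f : Module.Dual ℂ V}
    (hf : f ∈ dualPiece Vj j) :
    Dop hdec ρ m l a t f = dS m l j t • rhoStar ρ a f := by
  have hsum : (∑ i, dS m l i t • dproj Vj hdec i) f = dS m l j t • f := by
    rw [LinearMap.sum_apply, Finset.sum_eq_single j]
    · rw [LinearMap.smul_apply, dproj_apply_self Vj hdec hf]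
    · intro i _ hij
      rw [LinearMap.smul_apply, dproj_apply_ne Vj hdec (fun h => hij h.symm) hf, smul_zero]
    · intro h; exact absurd (Finset.mem_univ j) h
  rw [Dop, LinearMap.comp_apply, hsum, map_smul]

include hinv in
lemma Dop_mem (a : Centz σ) (t : ℝ) {j : J} {f : Module.Dual ℂ V}
    (hf : f ∈ dualPiece Vj j) : Dop hdec ρ m l a t f ∈ dualPiece Vj j := by
  rw [Dop_apply hdec ρ m l a t hf]
  exact Submodule.smul_mem _ _ (rhoStar_mem ρ hinv j a hf)

include hinv in
lemma Dop_mul (a b : Centz σ) (t s : ℝ) :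
    Dop hdec ρ m l a t ∘ₗ Dop hdec ρ m l b s = Dop hdec ρ m l (a * b) (t + s) := by
  refine ext_dual Vj hdec fun j f hf => ?_
  rw [LinearMap.comp_apply, Dop_apply hdec ρ m l b s hf, map_smul,
    Dop_apply hdec ρ m l a t (rhoStar_mem ρ hinv j b hf),
    Dop_apply hdec ρ m l (a * b) (t + s) hf, smul_smul, mul_comm (dS m l j s),
    dS_add, rhoStar_mul]

lemma Dop_one : Dop hdec ρ m l 1 0 = LinearMap.id := by
  refine ext_dual Vj hdec fun j f hf => ?_
  rw [Dop_apply hdec ρ m l 1 0 hf, dS_zero, one_smul, rhoStar_one]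
  rfl

end act

end Rep


section F

variable {G : Type*} [Group G] {σ : G}
  {V : Type*} [AddCommGroup V] [Module ℂ V]
  {J : Type*} [Fintype J] [DecidableEq J] {Vj : J → Submodule ℂ V}
  (hdec : DirectSum.IsInternal Vj)
  (ρ : Centz σ →* (Module.End ℂ V)ˣ)
  (m : J → ℕ) (l : ℕ)
  (hinv : ∀ (j : J) (a : Centz σ), ∀ v ∈ Vj j, (ρ a : Module.End ℂ V) v ∈ Vj j)

noncomputable def F0 (p : Centz σ × Multiplicative ℝ) : Module.End ℂ (V × Module.Dual ℂ V) :=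
  LinearMap.prodMap (Aop hdec ρ m l p.1 (Multiplicative.toAdd p.2))
    (Dop hdec ρ m l p.1 (Multiplicative.toAdd p.2))

include hinv in
lemma F0_mul (p q : Centz σ × Multiplicative ℝ) :
    F0 hdec ρ m l p * F0 hdec ρ m l q = F0 hdec ρ m l (p * q) := by
  show LinearMap.prodMap _ _ * LinearMap.prodMap _ _ = _
  rw [LinearMap.prodMap_mul, Module.End.mul_eq_comp, Module.End.mul_eq_comp,
    Aop_mul hdec ρ m l hinv, Dop_mul hdec ρ m l hinv]
  rfl

lemma F0_one : F0 hdec ρ m l 1 = 1 := by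
  show LinearMap.prodMap _ _ = 1
  rw [show ((1 : Centz σ × Multiplicative ℝ).1) = 1 from rfl,
    show (Multiplicative.toAdd (1 : Centz σ × Multiplicative ℝ).2) = 0 from rfl,
    Aop_one hdec ρ m l, Dop_one hdec ρ m l, LinearMap.prodMap_id]
  rfl

/-- The homomorphism `C_G(σ) × ℝ →* GL(V ⊕ V*)`. -/
noncomputable def Fhom : Centz σ × Multiplicative ℝ →* (Module.End ℂ (V × Module.Dual ℂ V))ˣ :=
  MonoidHom.mk'
    (fun p =>
      { val := F0 hdec ρ m l p
        inv := F0 hdec ρ m l p⁻¹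
        val_inv := by rw [F0_mul hdec ρ m l hinv, mul_inv_cancel, F0_one]
        inv_val := by rw [F0_mul hdec ρ m l hinv, inv_mul_cancel, F0_one] })
    (fun p q => Units.ext (F0_mul hdec ρ m l hinv p q).symm)

lemma Fhom_val (p : Centz σ × Multiplicative ℝ) :
    ((Fhom hdec ρ m l hinv p : (Module.End ℂ (V × Module.Dual ℂ V))ˣ)
      : Module.End ℂ (V × Module.Dual ℂ V)) = F0 hdec ρ m l p := rfl

lemma Fhom_fst (a : Centz σ) (t : ℝ) {j : J} {v : V} (hv : v ∈ Vj j) :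
    (Fhom hdec ρ m l hinv (a, Multiplicative.ofAdd t)
      : Module.End ℂ (V × Module.Dual ℂ V)) (v, 0)
      = (eS m l j t • ((ρ a : Module.End ℂ V) v), 0) := by
  rw [Fhom_val]
  show (Aop hdec ρ m l a t v, Dop hdec ρ m l a t 0) = _
  rw [Aop_apply hdec ρ m l a t hv, map_zero]

lemma Fhom_snd (a : Centz σ) (t : ℝ) {j : J} {f : Module.Dual ℂ V}
    (hf : f ∈ dualPiece Vj j) :
    (Fhom hdec ρ m l hinv (a, Multiplicative.ofAdd t)
      : Module.End ℂ (V × Module.Dual ℂ V)) (0, f)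
      = (0, dS m l j t • rhoStar ρ a f) := by
  rw [Fhom_val]
  show (Aop hdec ρ m l a t 0, Dop hdec ρ m l a t f) = _
  rw [Dop_apply hdec ρ m l a t hf, map_zero]

lemma dS_neg_one_mul_cS_inv (j : J) : dS m l j (-1) * (cS m l j)⁻¹ = 1 := by
  have h : dS m l j (-1) * (cS m l j)⁻¹
      = Complex.exp (((-1 : ℤ) : ℂ) * (2 * (Real.pi : ℂ) * Complex.I)) := by
    rw [cS, ← Complex.exp_neg, dS, ← Complex.exp_add]
    congr 1
    push_cast
    ring
  rw [h, Complex.exp_int_mul_two_pi_mul_I]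

section ker

variable (hσact : ∀ j, ∀ v ∈ Vj j, (ρ (gC σ) : Module.End ℂ V) v = cS m l j • v)

include hinv hσact in
lemma Fhom_genN : Fhom hdec ρ m l hinv (genN σ) = 1 := by
  refine Units.ext ?_
  rw [Fhom_val]
  show LinearMap.prodMap (Aop hdec ρ m l (gC σ) (Multiplicative.toAdd (Multiplicative.ofAdd (-1 : ℝ))))
      (Dop hdec ρ m l (gC σ) (Multiplicative.toAdd (Multiplicative.ofAdd (-1 : ℝ)))) = 1
  rw [show Multiplicative.toAdd (Multiplicative.ofAdd (-1 : ℝ)) = (-1 : ℝ) from rfl]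
  have hA : Aop hdec ρ m l (gC σ) (-1) = LinearMap.id := by
    refine ext_pieces Vj hdec fun j v hv => ?_
    rw [Aop_apply hdec ρ m l (gC σ) (-1) hv, hσact j v hv, smul_smul,
      eS_neg_one_mul_cS m l j, one_smul]
    rfl
  have hD : Dop hdec ρ m l (gC σ) (-1) = LinearMap.id := by
    refine ext_dual Vj hdec fun j f hf => ?_
    rw [Dop_apply hdec ρ m l (gC σ) (-1) hf,
      rhoStar_sigma hdec ρ m l (fun j v hv => hσact j v hv) hf, smul_smul,
      dS_neg_one_mul_cS_inv m l j, one_smul]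
    rfl
  rw [hA, hD, LinearMap.prodMap_id]
  rfl

include hinv hσact in
lemma Fhom_Ng : ∀ n ∈ Ng σ, Fhom hdec ρ m l hinv n = 1 := by
  intro n hn
  obtain ⟨k, rfl⟩ := Subgroup.mem_zpowers_iff.mp hn
  rw [map_zpow, Fhom_genN hdec ρ m l hinv hσact, one_zpow]

include hσact in
/-- powers of `σ` act by powers of the scalar -/
lemma sigma_pow_act (k : ℕ) (j : J) {v : V} (hv : v ∈ Vj j) :
    ((ρ (gC σ) ^ k : (Module.End ℂ V)ˣ) : Module.End ℂ V) v = cS m l j ^ k • v := by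
  induction k with
  | zero => rw [pow_zero, pow_zero, one_smul, Units.val_one]; rfl
  | succ k ih =>
    rw [pow_succ, Units.val_mul, Module.End.mul_apply, hσact j v hv, map_smul, ih,
      smul_smul, pow_succ]
    rw [mul_comm]

include hσact in
lemma sigma_zpow_act (k : ℤ) (j : J) {v : V} (hv : v ∈ Vj j) :
    ((ρ (gC σ) ^ k : (Module.End ℂ V)ˣ) : Module.End ℂ V) v = cS m l j ^ k • v := by
  cases k with
  | ofNat n =>
    rw [Int.ofNat_eq_coe, zpow_natCast, zpow_natCast]
    exact sigma_pow_act ρ m l hσact n j hv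
  | negSucc n =>
    rw [zpow_negSucc, zpow_negSucc]
    exact unit_inv_act (pow_ne_zero _ (cS_ne_zero m l j))
      (sigma_pow_act ρ m l hσact (n + 1) j hv)

variable [FiniteDimensional ℂ V] [Nontrivial V]

include hσact in
lemma Fhom_one_mem (hρ : Function.Injective ρ) (p : Centz σ × Multiplicative ℝ)
    (hp : Fhom hdec ρ m l hinv p = 1) : p ∈ Ng σ := by
  obtain ⟨a, u⟩ := p
  set t : ℝ := Multiplicative.toAdd u with ht
  have hF0 : F0 hdec ρ m l (a, u) = 1 := by
    have := congrArg Units.val hp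
    rwa [Fhom_val] at this
  have hA : ∀ v : V, Aop hdec ρ m l a t v = v := by
    intro v
    have := congrArg (fun (T : Module.End ℂ (V × Module.Dual ℂ V)) => T (v, 0)) hF0
    exact congrArg Prod.fst this
  have hD : ∀ f : Module.Dual ℂ V, Dop hdec ρ m l a t f = f := by
    intro f
    have := congrArg (fun (T : Module.End ℂ (V × Module.Dual ℂ V)) => T (0, f)) hF0
    exact congrArg Prod.snd this
  have hA' : ∀ j : J, ∀ v ∈ Vj j, eS m l j t • (ρ a : Module.End ℂ V) v = v := by
    intro j v hv
    rw [← Aop_apply hdec ρ m l a t hv]; exact hA v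
  -- find a nonzero vector in some piece
  obtain ⟨v, hvne⟩ := exists_ne (0 : V)
  have hex : ∃ j₀ : J, proj Vj hdec j₀ v ≠ 0 := by
    by_contra hall
    push_neg at hall
    apply hvne
    rw [← sum_proj Vj hdec v]
    exact Finset.sum_eq_zero fun j _ => hall j
  obtain ⟨j₀, hv₀ne⟩ := hex
  set v₀ : V := proj Vj hdec j₀ v with hv₀def
  have hv₀ : v₀ ∈ Vj j₀ := proj_mem Vj hdec j₀ v
  -- find a functional in the dual piece not vanishing on v₀
  have hφ : ∃ φ : Module.Dual ℂ V, φ v₀ ≠ 0 := by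
    by_contra hall
    push_neg at hall
    exact hv₀ne ((Module.forall_dual_apply_eq_zero_iff ℂ v₀).mp hall)
  obtain ⟨φ, hφne⟩ := hφ
  set f₀ : Module.Dual ℂ V := dproj Vj hdec j₀ φ with hf₀def
  have hf₀ : f₀ ∈ dualPiece Vj j₀ := dproj_mem Vj hdec j₀ φ
  have hf₀v : f₀ v₀ ≠ 0 := by
    show φ (proj Vj hdec j₀ v₀) ≠ 0
    rwa [proj_apply_self Vj hdec hv₀]
  -- inverse action
  have hainv : (((ρ a)⁻¹ : (Module.End ℂ V)ˣ) : Module.End ℂ V) v₀ = eS m l j₀ t • v₀ := by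
    have h1 := hA' j₀ v₀ hv₀
    have h2 := congrArg (((ρ a)⁻¹ : (Module.End ℂ V)ˣ) : Module.End ℂ V) h1
    rw [map_smul] at h2
    have h3 : (((ρ a)⁻¹ : (Module.End ℂ V)ˣ) : Module.End ℂ V)
        ((ρ a : Module.End ℂ V) v₀) = v₀ := by
      rw [← Module.End.mul_apply, ← Units.val_mul, inv_mul_cancel]; rfl
    rw [h3] at h2
    exact h2.symm
  -- scalar identity
  have hscal : dS m l j₀ t * eS m l j₀ t = 1 := by
    have h1 := hD f₀
    rw [Dop_apply hdec ρ m l a t hf₀] at h1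
    have h2 := congrArg (fun g : Module.Dual ℂ V => g v₀) h1
    simp only [LinearMap.smul_apply, smul_eq_mul] at h2
    rw [rhoStar_apply, hainv, map_smul, smul_eq_mul] at h2
    rw [← mul_assoc] at h2
    have h3 : (dS m l j₀ t * eS m l j₀ t) * f₀ v₀ = 1 * f₀ v₀ := by
      rw [one_mul]; exact h2
    exact mul_right_cancel₀ hf₀v h3
  -- t is an integer
  rw [dS_mul_eS] at hscal
  obtain ⟨n, hn⟩ := Complex.exp_eq_one_iff.mp hscal
  have htn : t = (n : ℝ) := by
    have h4 : (2 * (Real.pi : ℂ) * Complex.I) * (t : ℂ)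
        = (2 * (Real.pi : ℂ) * Complex.I) * (n : ℂ) := by
      rw [hn]; ring
    have h5 := mul_left_cancel₀ Complex.two_pi_I_ne_zero h4
    exact_mod_cast h5
  -- identify a
  have ha : a = gC σ ^ (-n : ℤ) := by
    apply hρ
    rw [map_zpow]
    refine Units.ext ?_
    refine ext_pieces Vj hdec fun j w hw => ?_
    rw [sigma_zpow_act ρ m l hσact (-n) j hw]
    have h6 := hA' j w hw
    have h7 : (ρ a : Module.End ℂ V) w = (eS m l j t)⁻¹ • w := by
      conv_rhs => rw [← h6]
      rw [smul_smul, inv_mul_cancel₀ (eS_ne_zero m l j t), one_smul]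
    rw [h7, htn, eS_int, ← zpow_neg]
  refine Subgroup.mem_zpowers_iff.mpr ⟨-n, ?_⟩
  have hfst : (genN σ ^ (-n : ℤ)).1 = gC σ ^ (-n : ℤ) :=
    map_zpow (MonoidHom.fst (Centz σ) (Multiplicative ℝ)) (genN σ) (-n)
  have hsnd : (genN σ ^ (-n : ℤ)).2 = Multiplicative.ofAdd (-1 : ℝ) ^ (-n : ℤ) :=
    map_zpow (MonoidHom.snd (Centz σ) (Multiplicative ℝ)) (genN σ) (-n)
  refine Prod.ext ?_ ?_
  · rw [hfst, ha]
  · rw [hsnd, ← ofAdd_zsmul]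
    have : u = Multiplicative.ofAdd t := rfl
    rw [this, htn]
    congr 1
    rw [zsmul_eq_mul]
    push_cast
    ring

end ker

end F


/-- With `ρ : C_G(σ) → GL(V)` faithful, `V ≠ 0` finite dimensional and
`V = ⨁_j V_j` as before, let `V*` carry the contragredient action and
`W_j = {f : f|_{V_i} = 0 for i ≠ j}`. Then (a) `V* = ⨁_j W_j`, each `W_j` is
`ρ*`-invariant and `ρ*(σ)` acts on `W_j` by `e^{−2πi m_j/l}`; (b) the operator acting on
`V_j` by `e^{2πi m_j t/l}·ρ(a)` and on `W_j` by `e^{2πi(1 − m_j/l)t}·ρ*(a)` defines a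
homomorphism `C_G(σ) × ℝ → GL(V ⊕ V*)` trivial on `N_σ`, and the induced representation
of `Λ_G(σ)` on `V ⊕ V*` is faithful. -/
theorem statement12 {G : Type*} [Group G] (σ : G) (l : ℕ)
    (hl : orderOf σ = l) (hl0 : 0 < l)
    {V : Type*} [AddCommGroup V] [Module ℂ V] [FiniteDimensional ℂ V] [Nontrivial V]
    {J : Type*} [Fintype J] [DecidableEq J] (Vj : J → Submodule ℂ V)
    (hdec : DirectSum.IsInternal Vj)
    (ρ : Centz σ →* (Module.End ℂ V)ˣ) (hρ : Function.Injective ρ)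
    (hinv : ∀ (j : J) (a : Centz σ), ∀ v ∈ Vj j, (ρ a : Module.End ℂ V) v ∈ Vj j)
    (m : J → ℕ) (hm : ∀ j, 1 ≤ m j ∧ m j ≤ l)
    (hσact : ∀ j, ∀ v ∈ Vj j, (ρ (gC σ) : Module.End ℂ V) v
        = Complex.exp (2 * (Real.pi : ℂ) * Complex.I * (m j : ℂ) / (l : ℂ)) • v) :
    (DirectSum.IsInternal (dualPiece Vj)
      ∧ (∀ (j : J) (a : Centz σ), ∀ f ∈ dualPiece Vj j, rhoStar ρ a f ∈ dualPiece Vj j)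
      ∧ (∀ j : J, ∀ f ∈ dualPiece Vj j,
          rhoStar ρ (gC σ) f
            = Complex.exp (-(2 * (Real.pi : ℂ) * Complex.I * (m j : ℂ) / (l : ℂ))) • f))
    ∧ ∃ F : Centz σ × Multiplicative ℝ →* (Module.End ℂ (V × Module.Dual ℂ V))ˣ,
        (∀ (a : Centz σ) (t : ℝ) (j : J),
          (∀ v ∈ Vj j,
            (F (a, Multiplicative.ofAdd t) : Module.End ℂ (V × Module.Dual ℂ V)) (v, 0)
              = (Complex.exp (2 * (Real.pi : ℂ) * Complex.I * (m j : ℂ) * (t : ℂ) / (l : ℂ))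
                  • ((ρ a : Module.End ℂ V) v), 0))
          ∧ (∀ f ∈ dualPiece Vj j,
            (F (a, Multiplicative.ofAdd t) : Module.End ℂ (V × Module.Dual ℂ V)) (0, f)
              = (0, Complex.exp (2 * (Real.pi : ℂ) * Complex.I
                      * (1 - (m j : ℂ) / (l : ℂ)) * (t : ℂ))
                  • (rhoStar ρ a f))))
        ∧ (∀ n ∈ Ng σ, F n = 1)
        ∧ ∃ ψ : Lam σ →* (Module.End ℂ (V × Module.Dual ℂ V))ˣ,
            (∀ (a : Centz σ) (t : ℝ) (j : J),
              (∀ v ∈ Vj j,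
                (ψ (lmk σ a t) : Module.End ℂ (V × Module.Dual ℂ V)) (v, 0)
                  = (Complex.exp (2 * (Real.pi : ℂ) * Complex.I * (m j : ℂ) * (t : ℂ) / (l : ℂ))
                      • ((ρ a : Module.End ℂ V) v), 0))
              ∧ (∀ f ∈ dualPiece Vj j,
                (ψ (lmk σ a t) : Module.End ℂ (V × Module.Dual ℂ V)) (0, f)
                  = (0, Complex.exp (2 * (Real.pi : ℂ) * Complex.I
                          * (1 - (m j : ℂ) / (l : ℂ)) * (t : ℂ))
                      • (rhoStar ρ a f))))
            ∧ Function.Injective ψ := by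
  have hσact' : ∀ j, ∀ v ∈ Vj j, (ρ (gC σ) : Module.End ℂ V) v = cS m l j • v :=
    fun j v hv => hσact j v hv
  refine ⟨⟨dualPiece_isInternal Vj hdec,
    fun j a f hf => rhoStar_mem ρ hinv j a hf, ?_⟩, ?_⟩
  · intro j f hf
    rw [rhoStar_sigma hdec ρ m l hσact' hf, Complex.exp_neg]
    rfl
  · refine ⟨Fhom hdec ρ m l hinv,
      fun a t j => ⟨fun v hv => Fhom_fst hdec ρ m l hinv a t hv,
        fun f hf => Fhom_snd hdec ρ m l hinv a t hf⟩,
      Fhom_Ng hdec ρ m l hinv hσact', ?_⟩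
    refine ⟨QuotientGroup.lift (Ng σ) (Fhom hdec ρ m l hinv)
      (fun n hn => MonoidHom.mem_ker.mpr (Fhom_Ng hdec ρ m l hinv hσact' n hn)), ?_, ?_⟩
    · intro a t j
      constructor
      · intro v hv
        rw [show lmk σ a t = QuotientGroup.mk (s := Ng σ) (a, Multiplicative.ofAdd t) from rfl,
          QuotientGroup.lift_mk']
        exact Fhom_fst hdec ρ m l hinv a t hv
      · intro f hf
        rw [show lmk σ a t = QuotientGroup.mk (s := Ng σ) (a, Multiplicative.ofAdd t) from rfl,
          QuotientGroup.lift_mk']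
        exact Fhom_snd hdec ρ m l hinv a t hf
    · rw [injective_iff_map_eq_one]
      intro x
      refine QuotientGroup.induction_on x fun p hp => ?_
      rw [QuotientGroup.lift_mk'] at hp
      exact (QuotientGroup.eq_one_iff p).mpr
        (Fhom_one_mem hdec ρ m l hinv hσact' hρ p hp)

end QEC
end

section
/- Let G be a group, H ≤ G a subgroup, X an H-set, and σ ∈ G. Let R ⊆ H be a set of representatives for the H-conjugacy classes of those elements of H that are conjugate to σ in G, and for each τ ∈ R fix g_τ ∈ G with τ = g_τ σ g_τ^{-1}. Then the map from the disjoint union ⨿_{τ∈R} C_G(τ) ×_{C_H(τ)} X^τ to (G ×_H X)^σ sending (τ, [a, x]) to the class [g_τ^{-1} a, x] is a well-defined bijection. -/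
namespace QEC

variable {G : Type*} [Group G]

/-- The balanced-product relation on `Γ × X`: `(γ·ι(s), x) ∼ (γ, s • x)`. -/
def balSetoid (Γ : Type*) [Group Γ] {S : Type*} [Group S] (ι : S →* Γ)
    (X : Type*) [MulAction S X] : Setoid (Γ × X) where
  r p q := ∃ s : S, p.1 = q.1 * ι s ∧ q.2 = s • p.2
  iseqv := by
    constructor
    · intro p
      exact ⟨1, by simp, by simp⟩
    · rintro p q ⟨s, h1, h2⟩
      refine ⟨s⁻¹, ?_, ?_⟩
      · rw [h1, map_inv, mul_assoc, mul_inv_cancel, mul_one]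
      · rw [h2, inv_smul_smul]
    · rintro p q r ⟨s, h1, h2⟩ ⟨u, h3, h4⟩
      refine ⟨u * s, ?_, ?_⟩
      · rw [h1, h3, map_mul, mul_assoc]
      · rw [h4, h2, mul_smul]

/-- The balanced product `Γ ×_S X` with respect to `ι : S → Γ` and an `S`-action on `X`. -/
def Bal (Γ : Type*) [Group Γ] {S : Type*} [Group S] (ι : S →* Γ)
    (X : Type*) [MulAction S X] : Type _ :=
  Quotient (balSetoid Γ ι X)

/-- The class of `(γ, x)` in the balanced product. -/
def balMk (Γ : Type*) [Group Γ] {S : Type*} [Group S] (ι : S →* Γ)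
    (X : Type*) [MulAction S X] : Γ × X → Bal Γ ι X :=
  Quotient.mk (balSetoid Γ ι X)

/-- Left translation by `g : Γ` on the balanced product. -/
def balSmul {Γ : Type*} [Group Γ] {S : Type*} [Group S] {ι : S →* Γ}
    {X : Type*} [MulAction S X] (g : Γ) : Bal Γ ι X → Bal Γ ι X :=
  Quotient.map (fun p => (g * p.1, p.2)) (by
    rintro p q ⟨s, h1, h2⟩
    exact ⟨s, by show g * p.1 = g * q.1 * ι s; rw [h1, mul_assoc], h2⟩)

/-- The fixed points `X^τ` of `τ ∈ H` acting on the `H`-set `X`. -/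
abbrev Xfix {G : Type*} [Group G] (H : Subgroup G) (X : Type*) [MulAction H X]
    (τ : H) : Type _ :=
  {x : X // τ • x = x}

/-- `C_H(τ)` viewed as the subgroup of `C_G(τ)` of elements lying in `H`. -/
def CHsub {G : Type*} [Group G] (H : Subgroup G) (τ : H) :
    Subgroup (Centz ((τ : G))) :=
  H.subgroupOf (Centz ((τ : G)))

/-- An element of `C_H(τ)`, as an element of `H`. -/
def CHsub.toH {G : Type*} [Group G] {H : Subgroup G} {τ : H}
    (s : CHsub H τ) : H :=
  ⟨((s : Centz ((τ : G))) : G), (Subgroup.mem_subgroupOf).mp s.2⟩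

lemma CHsub.toH_comm {G : Type*} [Group G] {H : Subgroup G} {τ : H}
    (s : CHsub H τ) : τ * CHsub.toH s = CHsub.toH s * τ := by
  apply Subtype.ext
  exact Subgroup.mem_centralizer_iff.mp (s : Centz ((τ : G))).2 (τ : G) (Set.mem_singleton _)

instance fixMulAction {G : Type*} [Group G] (H : Subgroup G) (X : Type*) [MulAction H X]
    (τ : H) : MulAction (CHsub H τ) (Xfix H X τ) where
  smul s x := ⟨CHsub.toH s • x.1, by
    calc (τ : H) • (CHsub.toH s • x.1) = (τ * CHsub.toH s) • x.1 := (mul_smul _ _ _).symm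
      _ = (CHsub.toH s * τ) • x.1 := by rw [CHsub.toH_comm]
      _ = CHsub.toH s • ((τ : H) • x.1) := mul_smul _ _ _
      _ = CHsub.toH s • x.1 := by rw [x.2]⟩
  one_smul x := Subtype.ext (one_smul H x.1)
  mul_smul s u x := Subtype.ext (mul_smul (CHsub.toH s) (CHsub.toH u) x.1)

private lemma conj_calc {G : Type*} [Group G] {a₁ a₂ g₁ g₂ σ t₁ t₂ : G}
    (h1 : g₁ * σ * g₁⁻¹ = t₁) (h2 : g₂ * σ * g₂⁻¹ = t₂)
    (c1 : t₁ * a₁ = a₁ * t₁) (c2 : t₂ * a₂ = a₂ * t₂) :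
    (a₂⁻¹ * g₂ * g₁⁻¹ * a₁) * t₁ * (a₂⁻¹ * g₂ * g₁⁻¹ * a₁)⁻¹ = t₂ := by
  have e1 : a₁ * t₁ * a₁⁻¹ = t₁ := by rw [← c1]; group
  have e2 : g₁⁻¹ * t₁ * g₁ = σ := by rw [← h1]; group
  have e3 : a₂⁻¹ * t₂ * a₂ = t₂ := by rw [mul_assoc, c2]; group
  calc (a₂⁻¹ * g₂ * g₁⁻¹ * a₁) * t₁ * (a₂⁻¹ * g₂ * g₁⁻¹ * a₁)⁻¹
      = a₂⁻¹ * g₂ * (g₁⁻¹ * (a₁ * t₁ * a₁⁻¹) * g₁) * g₂⁻¹ * a₂ := by group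
    _ = a₂⁻¹ * g₂ * (g₁⁻¹ * t₁ * g₁) * g₂⁻¹ * a₂ := by rw [e1]
    _ = a₂⁻¹ * (g₂ * σ * g₂⁻¹) * a₂ := by rw [e2]; group
    _ = a₂⁻¹ * t₂ * a₂ := by rw [h2]
    _ = t₂ := e3

/-- The underlying map `C_G(τ) ×_{C_H(τ)} X^τ → G ×_H X`, `[a, x] ↦ [g⁻¹ a, x]`. -/
def phi {G : Type*} [Group G] (H : Subgroup G) (X : Type*) [MulAction H X]
    (τ : H) (g : G) :
    Bal (Centz ((τ : G))) (CHsub H τ).subtype (Xfix H X τ) → Bal G H.subtype X :=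
  Quotient.lift (fun q => balMk G H.subtype X (g⁻¹ * (q.1 : G), q.2.1)) (by
    rintro ⟨a₁, x₁⟩ ⟨a₂, x₂⟩ ⟨s, h1, h2⟩
    apply Quotient.sound
    refine ⟨CHsub.toH s, ?_, ?_⟩
    · show g⁻¹ * (a₁ : G) = g⁻¹ * (a₂ : G) * (CHsub.toH s : G)
      have : (a₁ : G) = (a₂ : G) * ((s : Centz ((τ : G))) : G) :=
        congrArg (fun z : Centz ((τ : G)) => (z : G)) h1
      rw [this, mul_assoc]
      rfl
    · show x₂.1 = (CHsub.toH s : H) • x₁.1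
      exact congrArg Subtype.val h2)

lemma phi_mk {G : Type*} [Group G] (H : Subgroup G) (X : Type*) [MulAction H X]
    (τ : H) (g : G) (a : Centz ((τ : G))) (x : Xfix H X τ) :
    phi H X τ g (balMk _ _ _ (a, x)) = balMk G H.subtype X (g⁻¹ * (a : G), x.1) := rfl

lemma phi_fixed {G : Type*} [Group G] (H : Subgroup G) (X : Type*) [MulAction H X]
    (σ : G) (τ : H) (g : G) (hg : g * σ * g⁻¹ = (τ : G))
    (z : Bal (Centz ((τ : G))) (CHsub H τ).subtype (Xfix H X τ)) :
    balSmul σ (phi H X τ g z) = phi H X τ g z := by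
  induction z using Quotient.ind with
  | _ p =>
    obtain ⟨a, x⟩ := p
    show Quotient.map _ _ (Quotient.mk _ (g⁻¹ * (a : G), x.1)) = _
    rw [Quotient.map_mk]
    apply Quotient.sound
    refine ⟨τ, ?_, ?_⟩
    · show σ * (g⁻¹ * (a : G)) = g⁻¹ * (a : G) * (τ : G)
      have hσ : σ = g⁻¹ * (τ : G) * g := by rw [← hg]; group
      have hcomm : (τ : G) * (a : G) = (a : G) * (τ : G) :=
        Subgroup.mem_centralizer_iff.mp a.2 (τ : G) (Set.mem_singleton _)
      calc σ * (g⁻¹ * (a : G)) = g⁻¹ * ((τ : G) * (a : G)) := by rw [hσ]; group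
        _ = g⁻¹ * ((a : G) * (τ : G)) := by rw [hcomm]
        _ = g⁻¹ * (a : G) * (τ : G) := by group
    · exact x.2.symm

/-- Let `H ≤ G`, `X` an `H`-set, `σ ∈ G`, and let `R ⊆ H` be a set of
representatives for the `H`-conjugacy classes of elements of `H` that are conjugate to
`σ` in `G`, with `g_τ σ g_τ⁻¹ = τ` for each `τ ∈ R`.  Then
`⨿_{τ∈R} C_G(τ) ×_{C_H(τ)} X^τ → (G ×_H X)^σ`, `(τ, [a, x]) ↦ [g_τ⁻¹ a, x]`,
is a well-defined bijection. -/
theorem statement14 {G : Type*} [Group G] (H : Subgroup G) (X : Type*) [MulAction H X]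
    (σ : G) (R : Set H)
    (hconj : ∀ τ ∈ R, ∃ g : G, g * σ * g⁻¹ = (τ : G))
    (grep : H → G)
    (hgrep : ∀ τ ∈ R, grep τ * σ * (grep τ)⁻¹ = (τ : G))
    (hrep : ∀ h : H, (∃ g : G, g * σ * g⁻¹ = (h : G)) →
        ∃! τ : H, τ ∈ R ∧ ∃ c : H, c * h * c⁻¹ = τ) :
    ∃ f : ((τ : R) × Bal (Centz (((τ : H) : G))) (CHsub H (τ : H)).subtype
            (Xfix H X (τ : H)))
        → {z : Bal G H.subtype X // balSmul σ z = z},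
      (∀ (τ : R) (a : Centz (((τ : H) : G))) (x : Xfix H X (τ : H)),
        (f ⟨τ, balMk (Centz (((τ : H) : G))) (CHsub H (τ : H)).subtype
              (Xfix H X (τ : H)) (a, x)⟩ : Bal G H.subtype X)
          = balMk G H.subtype X ((grep (τ : H))⁻¹ * (a : G), x.1))
      ∧ Function.Bijective f := by
  classical
  refine ⟨fun p => ⟨phi H X (p.1 : H) (grep (p.1 : H)) p.2,
      phi_fixed H X σ (p.1 : H) (grep (p.1 : H)) (hgrep (p.1 : H) p.1.2) p.2⟩,
    fun τ a x => rfl, ?_, ?_⟩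
  · -- injectivity
    rintro ⟨τ₁, z₁⟩ ⟨τ₂, z₂⟩ hfeq
    induction z₁ using Quotient.ind with
    | _ p₁ =>
    induction z₂ using Quotient.ind with
    | _ p₂ =>
    obtain ⟨a₁, x₁⟩ := p₁
    obtain ⟨a₂, x₂⟩ := p₂
    have hbal : phi H X (τ₁ : H) (grep (τ₁ : H)) (Quotient.mk _ (a₁, x₁))
        = phi H X (τ₂ : H) (grep (τ₂ : H)) (Quotient.mk _ (a₂, x₂)) :=
      congrArg Subtype.val hfeq
    have hbal' : Quotient.mk (balSetoid G H.subtype X)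
          ((grep (τ₁ : H))⁻¹ * (a₁ : G), x₁.1)
        = Quotient.mk (balSetoid G H.subtype X)
          ((grep (τ₂ : H))⁻¹ * (a₂ : G), x₂.1) := hbal
    obtain ⟨h, h1G', h2G'⟩ := Quotient.exact hbal'
    have h1G : (grep (τ₁ : H))⁻¹ * (a₁ : G) = (grep (τ₂ : H))⁻¹ * (a₂ : G) * (h : G) := h1G'
    have h2G : x₂.1 = h • x₁.1 := h2G'
    -- h1G : (grep τ₁)⁻¹ * a₁ = (grep τ₂)⁻¹ * a₂ * h,  h2G : x₂.1 = h • x₁.1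
    have hG : (h : G) = (a₂ : G)⁻¹ * grep (τ₂ : H) * (grep (τ₁ : H))⁻¹ * (a₁ : G) := by
      calc (h : G) = ((grep (τ₂ : H))⁻¹ * (a₂ : G))⁻¹
            * ((grep (τ₂ : H))⁻¹ * (a₂ : G) * (h : G)) := by group
        _ = ((grep (τ₂ : H))⁻¹ * (a₂ : G))⁻¹ * ((grep (τ₁ : H))⁻¹ * (a₁ : G)) := by
            rw [← h1G]
        _ = (a₂ : G)⁻¹ * grep (τ₂ : H) * (grep (τ₁ : H))⁻¹ * (a₁ : G) := by group
    have hc1 : ((τ₁ : H) : G) * (a₁ : G) = (a₁ : G) * ((τ₁ : H) : G) :=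
      Subgroup.mem_centralizer_iff.mp a₁.2 _ (Set.mem_singleton _)
    have hc2 : ((τ₂ : H) : G) * (a₂ : G) = (a₂ : G) * ((τ₂ : H) : G) :=
      Subgroup.mem_centralizer_iff.mp a₂.2 _ (Set.mem_singleton _)
    have hconjG : (h : G) * ((τ₁ : H) : G) * (h : G)⁻¹ = ((τ₂ : H) : G) := by
      rw [hG]
      exact conj_calc (hgrep (τ₁ : H) τ₁.2) (hgrep (τ₂ : H) τ₂.2) hc1 hc2
    have hττ : (τ₁ : H) = (τ₂ : H) := by
      obtain ⟨τ', _, huniq⟩ := hrep (τ₁ : H) ⟨grep (τ₁ : H), hgrep (τ₁ : H) τ₁.2⟩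
      have e1 : (τ₁ : H) = τ' := huniq (τ₁ : H) ⟨τ₁.2, 1, by group⟩
      have e2 : (τ₂ : H) = τ' := huniq (τ₂ : H) ⟨τ₂.2, h, Subtype.ext hconjG⟩
      rw [e1, e2]
    obtain ⟨τ₁, hτ₁⟩ := τ₁
    obtain ⟨τ₂, hτ₂⟩ := τ₂
    simp only [Subtype.mk.injEq] at hττ
    subst hττ
    refine Sigma.ext rfl (heq_of_eq ?_)
    -- now show the balanced classes agree
    have hmemC : (h : G) ∈ Centz ((τ₁ : G)) := by
      rw [Subgroup.mem_centralizer_iff]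
      intro g hg
      rw [Set.mem_singleton_iff] at hg
      subst hg
      have := hconjG
      calc (τ₁ : G) * (h : G) = (h : G) * (τ₁ : G) * (h : G)⁻¹ * (h : G) := by
            rw [this]
        _ = (h : G) * (τ₁ : G) := by group
    refine Quotient.sound ⟨⟨⟨(h : G), hmemC⟩, Subgroup.mem_subgroupOf.mpr h.2⟩, ?_, ?_⟩
    · apply Subtype.ext
      show (a₁ : G) = (a₂ : G) * (h : G)
      calc (a₁ : G) = grep τ₁ * ((grep τ₁)⁻¹ * (a₁ : G)) := by group
        _ = grep τ₁ * ((grep τ₁)⁻¹ * (a₂ : G) * (h : G)) := by rw [h1G]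
        _ = (a₂ : G) * (h : G) := by group
    · apply Subtype.ext
      show x₂.1 = (_ : H) • x₁.1
      convert h2G using 2
      rfl
  · -- surjectivity
    rintro ⟨z, hz⟩
    induction z using Quotient.ind with
    | _ p =>
    obtain ⟨g, x⟩ := p
    have hz' : Quotient.map _ _ (Quotient.mk _ (g, x)) = Quotient.mk _ (g, x) := hz
    rw [Quotient.map_mk] at hz'
    obtain ⟨h, hσg', hx'⟩ := Quotient.exact hz'
    have hσg : σ * g = g * (h : G) := hσg'
    have hx : x = h • x := hx'
    have hhconj : g⁻¹ * σ * g⁻¹⁻¹ = (h : G) := by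
      rw [inv_inv]
      calc g⁻¹ * σ * g = g⁻¹ * (σ * g) := by group
        _ = g⁻¹ * (g * (h : G)) := by rw [hσg]
        _ = (h : G) := by group
    obtain ⟨τ, ⟨hτR, c, hc⟩, _⟩ := hrep h ⟨g⁻¹, hhconj⟩
    have hcG : (c : G) * (h : G) * (c : G)⁻¹ = (τ : G) := congrArg Subtype.val hc
    have hgτ : grep τ * σ * (grep τ)⁻¹ = (τ : G) := hgrep τ hτR
    have hamem : grep τ * g * (c : G)⁻¹ ∈ Centz ((τ : G)) := by
      rw [Subgroup.mem_centralizer_iff]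
      intro y hy
      rw [Set.mem_singleton_iff] at hy
      subst hy
      have key : (grep τ * g * (c : G)⁻¹) * (τ : G) * (grep τ * g * (c : G)⁻¹)⁻¹
          = (τ : G) := by
        calc (grep τ * g * (c : G)⁻¹) * (τ : G) * (grep τ * g * (c : G)⁻¹)⁻¹
            = grep τ * g * ((c : G)⁻¹ * (τ : G) * (c : G)) * g⁻¹ * (grep τ)⁻¹ := by group
          _ = grep τ * g * (h : G) * g⁻¹ * (grep τ)⁻¹ := by
              rw [show (c : G)⁻¹ * (τ : G) * (c : G) = (h : G) by rw [← hcG]; group]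
          _ = grep τ * (g * (h : G)) * g⁻¹ * (grep τ)⁻¹ := by group
          _ = grep τ * (σ * g) * g⁻¹ * (grep τ)⁻¹ := by rw [← hσg]
          _ = grep τ * σ * (grep τ)⁻¹ := by group
          _ = (τ : G) := hgτ
      calc (τ : G) * (grep τ * g * (c : G)⁻¹)
          = ((grep τ * g * (c : G)⁻¹) * (τ : G) * (grep τ * g * (c : G)⁻¹)⁻¹)
            * (grep τ * g * (c : G)⁻¹) := by rw [key]
        _ = (grep τ * g * (c : G)⁻¹) * (τ : G) := by group
    have hτch : τ * c = c * h := by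
      apply Subtype.ext
      push_cast
      calc (τ : G) * (c : G) = ((c : G) * (h : G) * (c : G)⁻¹) * (c : G) := by rw [hcG]
        _ = (c : G) * (h : G) := by group
    have hxfix : τ • (c • x) = c • x := by
      calc τ • (c • x) = (τ * c) • x := (mul_smul _ _ _).symm
        _ = (c * h) • x := by rw [hτch]
        _ = c • (h • x) := mul_smul _ _ _
        _ = c • x := by rw [← hx]
    refine ⟨⟨⟨τ, hτR⟩, Quotient.mk _ (⟨grep τ * g * (c : G)⁻¹, hamem⟩, ⟨c • x, hxfix⟩)⟩, ?_⟩
    apply Subtype.ext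
    show balMk G H.subtype X ((grep τ)⁻¹ * (grep τ * g * (c : G)⁻¹), c • x)
        = Quotient.mk _ (g, x)
    apply Quotient.sound
    refine ⟨c⁻¹, ?_, ?_⟩
    · show (grep τ)⁻¹ * (grep τ * g * (c : G)⁻¹) = g * (c : G)⁻¹
      group
    · show x = c⁻¹ • (c • x)
      rw [inv_smul_smul]

end QEC
end
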